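/- arXiv:1309.1305 — 4 statements merged into one kernel-verified Lean document; each statement's English description precedes it below -/
import Mathlib

section
/- For every unit flow Φ from A to B and every bounded nonnegative measurable function f on Ω×Ω, the flow dominates the expected edge occupation of the associated Markov chain up to its hitting time of B: ∫_{Ω×Ω} f(x,y) Φ(dx,dy) ≥ E^Φ[ Σ_{n=1}^{τ_B^Y} f(Y_{n−1},Y_n) ], where the sum is Σ_{n≥1} f(Y_{n−1},Y_n) 1{τ_B^Y ≥ n}. -/
open MeasureTheory ProbabilityTheory ENNReal Set Filter
open scoped Classical

noncomputable section

variable {Ω : Type*}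

/-- The Dirichlet form `E(h) = (1/2) ∫ (h(y)-h(x))² K(dx,dy)` (in `ℝ≥0∞`). -/
def dirichletForm [MeasurableSpace Ω] (K : Measure (Ω × Ω)) (h : Ω → ℝ) : ℝ≥0∞ :=
  2⁻¹ * ∫⁻ p, ENNReal.ofReal ((h p.2 - h p.1) ^ 2) ∂K

/-- The class `V_AB` of test potentials. -/
def VAB [MeasurableSpace Ω] (A B : Set Ω) (K : Measure (Ω × Ω)) : Set (Ω → ℝ) :=
  {h | Measurable h ∧ (∀ x ∈ A, h x = 1) ∧ (∀ x ∈ B, h x = 0) ∧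
    (∀ x, 0 ≤ h x ∧ h x ≤ 1) ∧ dirichletForm K h < ⊤}

/-- The capacity `Cap(A,B)`, defined by the Dirichlet principle. -/
def Cap [MeasurableSpace Ω] (A B : Set Ω) (K : Measure (Ω × Ω)) : ℝ≥0∞ :=
  ⨅ h ∈ VAB A B K, dirichletForm K h

/-- Finite paths `(γ₀, …, γ_{n+1})` with at least one edge. -/
abbrev PathSpace (Ω : Type*) := Σ n : ℕ, Fin (n + 2) → Ω

/-- The set `Γ_AB` of finite paths from `A` to `B` not touching `B` before the end. -/
def GammaAB (A B : Set Ω) : Set (PathSpace Ω) :=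
  {γ | γ.2 0 ∈ A ∧ γ.2 (Fin.last (γ.1 + 1)) ∈ B ∧
    ∀ i : Fin (γ.1 + 2), 0 < (i : ℕ) → (i : ℕ) < γ.1 + 1 → γ.2 i ∉ B}

/-- Sum of `g` over the (directed) edges of the path `γ`. -/
def pathSum (g : Ω × Ω → ℝ≥0∞) (γ : PathSpace Ω) : ℝ≥0∞ :=
  ∑ j : Fin (γ.1 + 1), g (γ.2 j.castSucc, γ.2 j.succ)

/-- `Φ` is the edge measure `Φ_P` of the path measure `P`. -/
def IsEdgeMeasure [MeasurableSpace Ω] (P : Measure (PathSpace Ω)) (Φ : Measure (Ω × Ω)) : Prop :=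
  ∀ g : Ω × Ω → ℝ≥0∞, Measurable g → ∫⁻ p, g p ∂Φ = ∫⁻ γ, pathSum g γ ∂P

/-- `Φ` is a unit flow from `A` to `B`. -/
def IsUnitFlow [MeasurableSpace Ω] (A B : Set Ω) (Φ : Measure (Ω × Ω)) : Prop :=
  SigmaFinite Φ ∧
  Φ (A ×ˢ univ) = 1 ∧ Φ (univ ×ˢ A) = 0 ∧
  Φ (univ ×ˢ B) = 1 ∧ Φ (B ×ˢ univ) = 0 ∧
  (∀ C : Set Ω, MeasurableSet C → C ⊆ (A ∪ B)ᶜ → Φ (C ×ˢ univ) = Φ (univ ×ˢ C)) ∧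
  ∃ χ : Set (Ω × Ω), MeasurableSet χ ∧ Φ χᶜ = 0 ∧ ∀ x y : Ω, (x, y) ∈ χ → (y, x) ∉ χ

/-- `χ` contains no loops. -/
def NoLoops (χ : Set (Ω × Ω)) : Prop :=
  ∀ (n : ℕ) (γ : Fin (n + 2) → Ω), γ (Fin.last (n + 1)) = γ 0 →
    ∃ j : Fin (n + 1), (γ j.castSucc, γ j.succ) ∉ χ

/-- `Φ` is a loop-free unit flow from `A` to `B`. -/
def IsLoopFreeUnitFlow [MeasurableSpace Ω] (A B : Set Ω) (Φ : Measure (Ω × Ω)) : Prop :=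
  IsUnitFlow A B Φ ∧
  ∃ χ : Set (Ω × Ω), MeasurableSet χ ∧ Φ χᶜ = 0 ∧
    (∀ x y : Ω, (x, y) ∈ χ → (y, x) ∉ χ) ∧ NoLoops χ

/-- `Φ(dx,dy) = ν(dx) ℓ(x,dy)` with `ν = Φ.fst` the left marginal. -/
def Disintegrates [MeasurableSpace Ω] (Φ : Measure (Ω × Ω)) (ℓ : Kernel Ω Ω) : Prop :=
  ∀ g : Ω × Ω → ℝ≥0∞, Measurable g →
    ∫⁻ p, g p ∂Φ = ∫⁻ x, ∫⁻ y, g (x, y) ∂(ℓ x) ∂Φ.fst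

/-- Finite-dimensional distributions of the Markov chain with initial law `μ0` and kernel `ℓ`. -/
def fdd [MeasurableSpace Ω] (μ0 : Measure Ω) (ℓ : Kernel Ω Ω) :
    (n : ℕ) → Measure (Fin (n + 1) → Ω)
  | 0 => μ0.map (fun x => fun _ => x)
  | n + 1 => (fdd μ0 ℓ n).bind (fun p => (ℓ (p (Fin.last n))).map (Fin.snoc p))

/-- `P` is the law of the Markov chain with initial law `μ0` and transition kernel `ℓ`. -/
def IsChainLaw [MeasurableSpace Ω] (μ0 : Measure Ω) (ℓ : Kernel Ω Ω)
    (P : Measure (ℕ → Ω)) : Prop :=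
  IsProbabilityMeasure P ∧
  ∀ n : ℕ, P.map (fun ω (i : Fin (n + 1)) => ω (i : ℕ)) = fdd μ0 ℓ n

/-- `Σ_{n=1}^{τ_B} g(Y_{n-1}, Y_n)`, where `τ_B = min{n ≥ 1 : Y_n ∈ B}`. -/
def stoppedSum (B : Set Ω) (g : Ω × Ω → ℝ≥0∞) (ω : ℕ → Ω) : ℝ≥0∞ :=
  ∑' n : ℕ, if ∀ m, 1 ≤ m → m ≤ n → ω m ∉ B then g (ω n, ω (n + 1)) else 0

/-- The event `τ_B < ∞`. -/
def HitsB (B : Set Ω) (ω : ℕ → Ω) : Prop := ∃ n : ℕ, 1 ≤ n ∧ ω n ∈ B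

/-- `τ_B`, viewed in `ℝ≥0∞`. -/
def hitTimeE (B : Set Ω) (ω : ℕ → Ω) : ℝ≥0∞ :=
  ∑' n : ℕ, if ∀ m, 1 ≤ m → m ≤ n → ω m ∉ B then 1 else 0

/-- The Berman-Konsowa functional `E^Φ[ (Σ_{n=1}^{τ_B} g(Y_{n-1},Y_n))⁻¹ ]`, with the
reciprocal taken to be `0` on `{τ_B = ∞}` (and automatically `0` when the sum is infinite). -/
def bkValue [MeasurableSpace Ω] (B : Set Ω) (g : Ω × Ω → ℝ≥0∞)
    (P : Measure (ℕ → Ω)) : ℝ≥0∞ :=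
  ∫⁻ ω, (if HitsB B ω then (stoppedSum B g ω)⁻¹ else 0) ∂P

end


noncomputable section FlowAux

variable {Ω : Type*} [MeasurableSpace Ω]


lemma measurable_snoc2 {n : ℕ} :
    Measurable (fun q : (Fin (n + 1) → Ω) × Ω => (Fin.snoc q.1 q.2 : Fin (n + 2) → Ω)) := by
  apply measurable_pi_lambda
  intro i
  refine Fin.lastCases ?_ ?_ i
  · simpa [Fin.snoc_last] using (measurable_snd : Measurable fun q : (Fin (n+1) → Ω) × Ω => q.2)
  · intro j
    simpa [Fin.snoc_castSucc, Function.comp_def] using (measurable_pi_apply j).comp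
      (measurable_fst : Measurable fun q : (Fin (n+1) → Ω) × Ω => q.1)

lemma measurable_mapSnoc (ℓ : Kernel Ω Ω) [IsSFiniteKernel ℓ] {n : ℕ} :
    Measurable (fun p : Fin (n + 1) → Ω =>
      ((ℓ (p (Fin.last n))).map (Fin.snoc p) : Measure (Fin (n + 2) → Ω))) := by
  apply Measure.measurable_of_measurable_coe
  intro s hs
  have heq : (fun p : Fin (n + 1) → Ω => (ℓ (p (Fin.last n))).map (Fin.snoc p) s)
      = fun p => ∫⁻ y, s.indicator (fun _ => (1 : ℝ≥0∞)) (Fin.snoc p y)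
          ∂((ℓ.comap (fun p : Fin (n + 1) → Ω => p (Fin.last n)) (measurable_pi_apply _)) p) := by
    funext p
    have hsp : Measurable (fun y : Ω => (Fin.snoc p y : Fin (n + 2) → Ω)) :=
      by exact measurable_snoc2.comp measurable_prodMk_left
    rw [Measure.map_apply hsp hs, Kernel.comap_apply,
      ← lintegral_indicator_one (hsp hs)]
    congr 1
  rw [heq]
  exact Measurable.lintegral_kernel_prod_right'
    (((measurable_one.indicator hs)).comp measurable_snoc2)


/-- `fdd` at a successor index, as an integral identity. -/
lemma lintegral_fdd_succ (μ0 : Measure Ω) (ℓ : Kernel Ω Ω) [IsSFiniteKernel ℓ] (n : ℕ)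
    {F : (Fin (n + 2) → Ω) → ℝ≥0∞} (hF : Measurable F) :
    ∫⁻ p, F p ∂(fdd μ0 ℓ (n + 1))
      = ∫⁻ p, ∫⁻ y, F (Fin.snoc p y) ∂(ℓ (p (Fin.last n))) ∂(fdd μ0 ℓ n) := by
  have h1 : fdd μ0 ℓ (n + 1)
      = (fdd μ0 ℓ n).bind (fun p => (ℓ (p (Fin.last n))).map (Fin.snoc p)) := rfl
  rw [h1, Measure.lintegral_bind (measurable_mapSnoc ℓ).aemeasurable hF.aemeasurable]
  refine lintegral_congr fun p => ?_
  have hsp : Measurable (fun y : Ω => (Fin.snoc p y : Fin (n + 2) → Ω)) :=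
    by exact measurable_snoc2.comp measurable_prodMk_left
  rw [lintegral_map hF hsp]

/-- Occupation measures of the chain killed on entering `B`. -/
def rho (B : Set Ω) (μ0 : Measure Ω) (ℓ : Kernel Ω Ω) : ℕ → Measure Ω
  | 0 => μ0
  | n + 1 => ((rho B μ0 ℓ n).bind (fun x => ℓ x)).restrict Bᶜ

lemma hGoodSet (B : Set Ω) (hB : MeasurableSet B) (m : ℕ) :
    MeasurableSet {p : Fin (m + 1) → Ω | ∀ i : Fin (m + 1), 1 ≤ (i : ℕ) → p i ∉ B} := by
  have : {p : Fin (m + 1) → Ω | ∀ i : Fin (m + 1), 1 ≤ (i : ℕ) → p i ∉ B}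
      = ⋂ i : Fin (m + 1), ⋂ _ : 1 ≤ (i : ℕ), (fun p : Fin (m + 1) → Ω => p i) ⁻¹' Bᶜ := by
    ext p; simp [Set.mem_iInter]
  rw [this]
  exact MeasurableSet.iInter fun i => MeasurableSet.iInter fun _ =>
    (measurable_pi_apply i) hB.compl

lemma lintegral_good_fdd (B : Set Ω) (hB : MeasurableSet B) (μ0 : Measure Ω)
    (ℓ : Kernel Ω Ω) [IsSFiniteKernel ℓ] :
    ∀ (n : ℕ) (h : Ω → ℝ≥0∞), Measurable h →
    ∫⁻ p, (if ∀ i : Fin (n + 1), 1 ≤ (i : ℕ) → p i ∉ B then h (p (Fin.last n)) else 0)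
        ∂(fdd μ0 ℓ n)
      = ∫⁻ x, h x ∂(rho B μ0 ℓ n)
  | 0, h, hh => by
      have h0 : fdd μ0 ℓ 0 = μ0.map (fun x => fun _ : Fin 1 => x) := rfl
      have hcond : ∀ p : Fin 1 → Ω, (∀ i : Fin 1, 1 ≤ (i : ℕ) → p i ∉ B) := by
        intro p i hi
        exact absurd hi (by omega)
      rw [h0]
      have : (fun p : Fin 1 → Ω =>
          if ∀ i : Fin 1, 1 ≤ (i : ℕ) → p i ∉ B then h (p (Fin.last 0)) else 0)
          = fun p => h (p (Fin.last 0)) := by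
        funext p; rw [if_pos (hcond p)]
      rw [this]
      rw [lintegral_map (μ := μ0) (g := fun (x : Ω) => fun _ : Fin 1 => x)
        (f := fun p : Fin 1 → Ω => h (p (Fin.last 0)))
        (hh.comp (measurable_pi_apply _))
        (measurable_pi_lambda _ fun _ => measurable_id)]
      rfl
  | n + 1, h, hh => by
      set F : (Fin (n + 2) → Ω) → ℝ≥0∞ := fun p =>
        if ∀ i : Fin (n + 2), 1 ≤ (i : ℕ) → p i ∉ B then h (p (Fin.last (n + 1))) else 0 with hFdef
      have hF : Measurable F :=
        Measurable.ite (hGoodSet B hB (n + 1)) (hh.comp (measurable_pi_apply _)) measurable_const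
      have key : ∀ (p : Fin (n + 1) → Ω) (y : Ω),
          F (Fin.snoc p y) = if ∀ i : Fin (n + 1), 1 ≤ (i : ℕ) → p i ∉ B
            then Bᶜ.indicator h y else 0 := by
        intro p y
        have hiff : (∀ i : Fin (n + 2), 1 ≤ (i : ℕ) → (Fin.snoc p y : Fin (n + 2) → Ω) i ∉ B)
            ↔ ((∀ i : Fin (n + 1), 1 ≤ (i : ℕ) → p i ∉ B) ∧ y ∉ B) := by
          constructor
          · intro hall
            refine ⟨fun i hi => ?_, ?_⟩
            · have := hall i.castSucc (by simpa using hi)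
              rwa [Fin.snoc_castSucc] at this
            · have := hall (Fin.last (n + 1)) (by simp)
              rwa [Fin.snoc_last] at this
          · rintro ⟨h1, h2⟩ i
            refine Fin.lastCases ?_ ?_ i
            · intro _
              rwa [Fin.snoc_last]
            · intro j hj
              rw [Fin.snoc_castSucc]
              exact h1 j (by simpa using hj)
        have hval : (Fin.snoc p y : Fin (n + 2) → Ω) (Fin.last (n + 1)) = y := by simp
        have e1 : F (Fin.snoc p y)
            = if ((∀ i : Fin (n + 1), 1 ≤ (i : ℕ) → p i ∉ B) ∧ y ∉ B) then h y else 0 := by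
          calc F (Fin.snoc p y)
              = if (∀ i : Fin (n + 2), 1 ≤ (i : ℕ) → (Fin.snoc p y : Fin (n + 2) → Ω) i ∉ B)
                then h ((Fin.snoc p y : Fin (n + 2) → Ω) (Fin.last (n + 1))) else 0 := rfl
            _ = _ := by rw [hval]; exact if_congr hiff rfl rfl
        rw [e1]
        by_cases h1 : ∀ i : Fin (n + 1), 1 ≤ (i : ℕ) → p i ∉ B <;>
          by_cases h2 : y ∈ B <;>
          simp [h1, h2, Set.indicator_apply]
      have hH : Measurable (fun x => ∫⁻ y, Bᶜ.indicator h y ∂(ℓ x)) := by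
        exact Measurable.lintegral_kernel_prod_right'
          ((hh.indicator hB.compl).comp measurable_snd)
      calc ∫⁻ p, (if ∀ i : Fin (n + 2), 1 ≤ (i : ℕ) → p i ∉ B
              then h (p (Fin.last (n + 1))) else 0) ∂(fdd μ0 ℓ (n + 1))
          = ∫⁻ p, ∫⁻ y, F (Fin.snoc p y) ∂(ℓ (p (Fin.last n))) ∂(fdd μ0 ℓ n) :=
            lintegral_fdd_succ μ0 ℓ n hF
        _ = ∫⁻ p, (if ∀ i : Fin (n + 1), 1 ≤ (i : ℕ) → p i ∉ B
              then (fun x => ∫⁻ y, Bᶜ.indicator h y ∂(ℓ x)) (p (Fin.last n)) else 0)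
              ∂(fdd μ0 ℓ n) := by
            refine lintegral_congr fun p => ?_
            simp only [key p]
            by_cases hp : ∀ i : Fin (n + 1), 1 ≤ (i : ℕ) → p i ∉ B
            · simp only [if_pos hp]
            · simp only [if_neg hp, lintegral_zero]
        _ = ∫⁻ x, ∫⁻ y, Bᶜ.indicator h y ∂(ℓ x) ∂(rho B μ0 ℓ n) :=
            lintegral_good_fdd B hB μ0 ℓ n _ hH
        _ = ∫⁻ y, Bᶜ.indicator h y ∂((rho B μ0 ℓ n).bind (fun x => ℓ x)) :=
            (Measure.lintegral_bind (Kernel.measurable ℓ).aemeasurable (hh.indicator hB.compl).aemeasurable).symm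
        _ = ∫⁻ x, h x ∂(rho B μ0 ℓ (n + 1)) := by
            rw [lintegral_indicator hB.compl]
            rfl

/-- Each term of the stopped sum integrates against the occupation measure. -/
lemma lintegral_term (B : Set Ω) (hB : MeasurableSet B) (μ0 : Measure Ω)
    (ℓ : Kernel Ω Ω) [IsSFiniteKernel ℓ] (P : Measure (ℕ → Ω))
    (hPfdd : ∀ n : ℕ, P.map (fun ω (i : Fin (n + 1)) => ω (i : ℕ)) = fdd μ0 ℓ n)
    (g : Ω × Ω → ℝ≥0∞) (hg : Measurable g) (n : ℕ) :
    ∫⁻ ω, (if ∀ m, 1 ≤ m → m ≤ n → ω m ∉ B then g (ω n, ω (n + 1)) else 0) ∂P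
      = ∫⁻ x, ∫⁻ y, g (x, y) ∂(ℓ x) ∂(rho B μ0 ℓ n) := by
  set G : Ω → ℝ≥0∞ := fun x => ∫⁻ y, g (x, y) ∂(ℓ x) with hGdef
  have hG : Measurable G := Measurable.lintegral_kernel_prod_right' hg
  set F : (Fin (n + 2) → Ω) → ℝ≥0∞ := fun p =>
    if ∀ i : Fin (n + 2), 1 ≤ (i : ℕ) → (i : ℕ) ≤ n → p i ∉ B
      then g (p ⟨n, by omega⟩, p ⟨n + 1, by omega⟩) else 0 with hFdef
  have hFset : MeasurableSet
      {p : Fin (n + 2) → Ω | ∀ i : Fin (n + 2), 1 ≤ (i : ℕ) → (i : ℕ) ≤ n → p i ∉ B} := by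
    have : {p : Fin (n + 2) → Ω | ∀ i : Fin (n + 2), 1 ≤ (i : ℕ) → (i : ℕ) ≤ n → p i ∉ B}
        = ⋂ i : Fin (n + 2), ⋂ _ : 1 ≤ (i : ℕ), ⋂ _ : (i : ℕ) ≤ n,
            (fun p : Fin (n + 2) → Ω => p i) ⁻¹' Bᶜ := by
      ext p; simp [Set.mem_iInter]
    rw [this]
    exact MeasurableSet.iInter fun i => MeasurableSet.iInter fun _ =>
      MeasurableSet.iInter fun _ => (measurable_pi_apply i) hB.compl
  have hF : Measurable F := Measurable.ite hFset
    (hg.comp ((measurable_pi_apply _).prodMk (measurable_pi_apply _))) measurable_const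
  have hproj : Measurable (fun ω : ℕ → Ω => fun i : Fin (n + 2) => ω (i : ℕ)) :=
    measurable_pi_lambda _ fun i => measurable_pi_apply _
  have step1 : ∫⁻ ω, (if ∀ m, 1 ≤ m → m ≤ n → ω m ∉ B then g (ω n, ω (n + 1)) else 0) ∂P
      = ∫⁻ p, F p ∂(fdd μ0 ℓ (n + 1)) := by
    rw [← hPfdd (n + 1), lintegral_map hF hproj]
    refine lintegral_congr fun ω => ?_
    have hc : (∀ m, 1 ≤ m → m ≤ n → ω m ∉ B)
        ↔ (∀ i : Fin (n + 2), 1 ≤ (i : ℕ) → (i : ℕ) ≤ n → ω (i : ℕ) ∉ B) := by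
      constructor
      · intro hall i h1 h2
        exact hall _ h1 h2
      · intro hall m h1 h2
        exact hall ⟨m, by omega⟩ h1 h2
    simp only [hFdef]
    by_cases hcc : ∀ m, 1 ≤ m → m ≤ n → ω m ∉ B
    · rw [if_pos hcc, if_pos (hc.mp hcc)]
    · rw [if_neg hcc, if_neg (fun hh => hcc (hc.mpr hh))]
  rw [step1, lintegral_fdd_succ μ0 ℓ n hF,
    ← lintegral_good_fdd B hB μ0 ℓ n G hG]
  refine lintegral_congr fun p => ?_
  have keyc : ∀ y : Ω,
      ((∀ i : Fin (n + 2), 1 ≤ (i : ℕ) → (i : ℕ) ≤ n →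
        (Fin.snoc p y : Fin (n + 2) → Ω) i ∉ B)
      ↔ (∀ i : Fin (n + 1), 1 ≤ (i : ℕ) → p i ∉ B)) := by
    intro y
    constructor
    · intro hall i h1
      have := hall i.castSucc (by simpa using h1) (by simpa using Fin.is_le i)
      rwa [Fin.snoc_castSucc] at this
    · intro hall i h1 h2
      have hieq : i = Fin.castSucc ⟨(i : ℕ), by omega⟩ := by
        apply Fin.ext; simp
      rw [hieq, Fin.snoc_castSucc]
      exact hall _ h1
  have e : ∀ y : Ω, F (Fin.snoc p y)
      = if (∀ i : Fin (n + 1), 1 ≤ (i : ℕ) → p i ∉ B) then g (p (Fin.last n), y) else 0 := by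
    intro y
    have hv1 : (Fin.snoc p y : Fin (n + 2) → Ω) ⟨n, by omega⟩ = p (Fin.last n) := by
      have h' : (⟨n, by omega⟩ : Fin (n + 2)) = Fin.castSucc (Fin.last n) := rfl
      rw [h', Fin.snoc_castSucc]
    have hv2 : (Fin.snoc p y : Fin (n + 2) → Ω) ⟨n + 1, by omega⟩ = y := by
      have h' : (⟨n + 1, by omega⟩ : Fin (n + 2)) = Fin.last (n + 1) := rfl
      rw [h', Fin.snoc_last]
    calc F (Fin.snoc p y)
        = if (∀ i : Fin (n + 2), 1 ≤ (i : ℕ) → (i : ℕ) ≤ n →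
              (Fin.snoc p y : Fin (n + 2) → Ω) i ∉ B)
          then g ((Fin.snoc p y : Fin (n + 2) → Ω) ⟨n, by omega⟩,
                  (Fin.snoc p y : Fin (n + 2) → Ω) ⟨n + 1, by omega⟩) else 0 := rfl
      _ = _ := by rw [hv1, hv2]; exact if_congr (keyc y) rfl rfl
  simp only [e]
  by_cases hp : ∀ i : Fin (n + 1), 1 ≤ (i : ℕ) → p i ∉ B
  · simp only [if_pos hp]; rfl
  · simp only [if_neg hp, lintegral_zero]

/-- Partial sums of the occupation measures are dominated by the left marginal. -/
lemma sum_rho_le (A B : Set Ω) (hA : MeasurableSet A) (hB : MeasurableSet B)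
    (Φ : Measure (Ω × Ω)) (ℓ : Kernel Ω Ω)
    (hΩA : Φ (univ ×ˢ A) = 0)
    (hcons : ∀ C : Set Ω, MeasurableSet C → C ⊆ (A ∪ B)ᶜ → Φ (C ×ˢ univ) = Φ (univ ×ˢ C))
    (hdis : Disintegrates Φ ℓ) :
    ∀ n : ℕ, (∑ k ∈ Finset.range (n + 1), rho B (Φ.fst.restrict A) ℓ k) ≤ Φ.fst := by
  have fact1 : ∀ D : Set Ω, MeasurableSet D → ∫⁻ x, ℓ x D ∂Φ.fst = Φ (univ ×ˢ D) := by
    intro D hD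
    have hdD := hdis (fun p => D.indicator (fun _ => (1 : ℝ≥0∞)) p.2)
      ((measurable_one.indicator hD).comp measurable_snd)
    have hL : ∫⁻ p : Ω × Ω, D.indicator (fun _ => (1 : ℝ≥0∞)) p.2 ∂Φ = Φ (univ ×ˢ D) := by
      have h1 : ∀ p : Ω × Ω, D.indicator (fun _ => (1 : ℝ≥0∞)) p.2
          = (Prod.snd ⁻¹' D).indicator (fun _ => (1 : ℝ≥0∞)) p := by
        intro p; by_cases hmem : p.2 ∈ D <;> simp [Set.indicator_apply, hmem]
      rw [lintegral_congr h1, lintegral_indicator (measurable_snd hD), setLIntegral_one]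
      congr 1
      ext ⟨x, y⟩; simp
    have hR : ∀ x, ∫⁻ y, D.indicator (fun _ => (1 : ℝ≥0∞)) y ∂(ℓ x) = ℓ x D := by
      intro x
      rw [lintegral_indicator hD, setLIntegral_one]
    calc ∫⁻ x, ℓ x D ∂Φ.fst
        = ∫⁻ x, ∫⁻ y, D.indicator (fun _ => (1 : ℝ≥0∞)) y ∂(ℓ x) ∂Φ.fst :=
          lintegral_congr fun x => (hR x).symm
      _ = ∫⁻ p : Ω × Ω, D.indicator (fun _ => (1 : ℝ≥0∞)) p.2 ∂Φ := hdD.symm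
      _ = Φ (univ ×ˢ D) := hL
  have fact2 : ∀ C : Set Ω, MeasurableSet C → Φ.fst C = Φ (C ×ˢ univ) := by
    intro C hC
    rw [Measure.fst_apply hC]
    congr 1
    ext ⟨x, y⟩; simp
  intro n
  induction n with
  | zero =>
    refine Measure.le_iff.mpr fun s hs => ?_
    simp only [zero_add, Finset.range_one, Finset.sum_singleton]
    rw [show rho B (Φ.fst.restrict A) ℓ 0 = Φ.fst.restrict A from rfl,
      Measure.restrict_apply hs]
    exact measure_mono inter_subset_left
  | succ n ih =>
    refine Measure.le_iff.mpr fun C hC => ?_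
    have hCB : MeasurableSet (C ∩ Bᶜ) := hC.inter hB.compl
    have hsum1 : (∑ k ∈ Finset.range (n + 2), rho B (Φ.fst.restrict A) ℓ k) C
        = (∑ k ∈ Finset.range (n + 1), rho B (Φ.fst.restrict A) ℓ (k + 1) C)
          + (Φ.fst.restrict A) C := by
      rw [Measure.finset_sum_apply, Finset.sum_range_succ']
      rfl
    have hterm : ∀ k, rho B (Φ.fst.restrict A) ℓ (k + 1) C
        = ∫⁻ x, ℓ x (C ∩ Bᶜ) ∂(rho B (Φ.fst.restrict A) ℓ k) := by
      intro k
      rw [show rho B (Φ.fst.restrict A) ℓ (k + 1)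
          = ((rho B (Φ.fst.restrict A) ℓ k).bind (fun x => ℓ x)).restrict Bᶜ from rfl,
        Measure.restrict_apply hC,
        Measure.bind_apply hCB (Kernel.measurable ℓ).aemeasurable]
    have hsum2 : (∑ k ∈ Finset.range (n + 1), rho B (Φ.fst.restrict A) ℓ (k + 1) C)
        = ∫⁻ x, ℓ x (C ∩ Bᶜ) ∂(∑ k ∈ Finset.range (n + 1), rho B (Φ.fst.restrict A) ℓ k) := by
      rw [lintegral_finset_sum_measure]
      exact Finset.sum_congr rfl fun k _ => hterm k
    have hDsub : (C ∩ Bᶜ) ∩ Aᶜ ⊆ (A ∪ B)ᶜ := by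
      intro x hx
      simp only [Set.mem_compl_iff, Set.mem_union]
      push_neg
      exact ⟨hx.2, hx.1.2⟩
    have hDmeas : MeasurableSet ((C ∩ Bᶜ) ∩ Aᶜ) := hCB.inter hA.compl
    have hsplit : Φ (univ ×ˢ (C ∩ Bᶜ)) ≤ Φ.fst ((C ∩ Bᶜ) ∩ Aᶜ) := by
      have hsets : (univ ×ˢ (C ∩ Bᶜ) : Set (Ω × Ω))
          ⊆ (univ ×ˢ ((C ∩ Bᶜ) ∩ Aᶜ)) ∪ (univ ×ˢ ((C ∩ Bᶜ) ∩ A)) := by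
        rintro ⟨x, y⟩ hxy
        by_cases hy : y ∈ A
        · right; exact ⟨trivial, hxy.2, hy⟩
        · left; exact ⟨trivial, hxy.2, hy⟩
      calc Φ (univ ×ˢ (C ∩ Bᶜ))
          ≤ Φ ((univ ×ˢ ((C ∩ Bᶜ) ∩ Aᶜ)) ∪ (univ ×ˢ ((C ∩ Bᶜ) ∩ A))) := measure_mono hsets
        _ ≤ Φ (univ ×ˢ ((C ∩ Bᶜ) ∩ Aᶜ)) + Φ (univ ×ˢ ((C ∩ Bᶜ) ∩ A)) := measure_union_le _ _
        _ ≤ Φ (univ ×ˢ ((C ∩ Bᶜ) ∩ Aᶜ)) + Φ (univ ×ˢ A) := by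
            gcongr
            exact inter_subset_right
        _ = Φ (univ ×ˢ ((C ∩ Bᶜ) ∩ Aᶜ)) := by rw [hΩA, add_zero]
        _ = Φ (((C ∩ Bᶜ) ∩ Aᶜ) ×ˢ univ) := (hcons _ hDmeas hDsub).symm
        _ = Φ.fst ((C ∩ Bᶜ) ∩ Aᶜ) := (fact2 _ hDmeas).symm
    have hdisj : Disjoint ((C ∩ Bᶜ) ∩ Aᶜ) (C ∩ A) :=
      Disjoint.mono inter_subset_right inter_subset_right disjoint_compl_left
    calc (∑ k ∈ Finset.range (n + 2), rho B (Φ.fst.restrict A) ℓ k) C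
        = (∑ k ∈ Finset.range (n + 1), rho B (Φ.fst.restrict A) ℓ (k + 1) C)
          + (Φ.fst.restrict A) C := hsum1
      _ = (∫⁻ x, ℓ x (C ∩ Bᶜ) ∂(∑ k ∈ Finset.range (n + 1), rho B (Φ.fst.restrict A) ℓ k))
          + Φ.fst (C ∩ A) := by rw [hsum2, Measure.restrict_apply hC]
      _ ≤ (∫⁻ x, ℓ x (C ∩ Bᶜ) ∂Φ.fst) + Φ.fst (C ∩ A) := by
          gcongr
      _ = Φ (univ ×ˢ (C ∩ Bᶜ)) + Φ.fst (C ∩ A) := by rw [fact1 _ hCB]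
      _ ≤ Φ.fst ((C ∩ Bᶜ) ∩ Aᶜ) + Φ.fst (C ∩ A) := by gcongr
      _ = Φ.fst (((C ∩ Bᶜ) ∩ Aᶜ) ∪ (C ∩ A)) := (measure_union hdisj (hC.inter hA)).symm
      _ ≤ Φ.fst C := measure_mono (by
          apply Set.union_subset
          · exact (inter_subset_left).trans inter_subset_left
          · exact inter_subset_left)

end FlowAux

/-- **Flow domination (Proposition: flow dominates the expected edge occupation).** -/
theorem unitFlow_dominates_edge_occupation
    {Ω : Type*} [MeasurableSpace Ω] [TopologicalSpace Ω] [PolishSpace Ω] [BorelSpace Ω]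
    (A B : Set Ω) (hA : MeasurableSet A) (hB : MeasurableSet B) (hAB : Disjoint A B)
    (Φ : Measure (Ω × Ω)) (hΦ : IsUnitFlow A B Φ)
    (ℓ : Kernel Ω Ω) (hℓ : IsMarkovKernel ℓ) (hdis : Disintegrates Φ ℓ)
    (P : Measure (ℕ → Ω)) (hP : IsChainLaw (Φ.fst.restrict A) ℓ P)
    (g : Ω × Ω → ℝ≥0∞) (hg : Measurable g)
    (M : ℝ≥0∞) (hM : M < ⊤) (hgM : ∀ p, g p ≤ M) :
    ∫⁻ ω, stoppedSum B g ω ∂P ≤ ∫⁻ p, g p ∂Φ := by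
  haveI := hℓ
  obtain ⟨hsig, hAΦ, hΩA, hΩB, hBΦ, hcons, -⟩ := hΦ
  obtain ⟨hPprob, hPfdd⟩ := hP
  have hfn : ∀ n : ℕ, Measurable (fun ω : ℕ → Ω =>
      if ∀ m, 1 ≤ m → m ≤ n → ω m ∉ B then g (ω n, ω (n + 1)) else 0) := by
    intro n
    have hcset : MeasurableSet {ω : ℕ → Ω | ∀ m, 1 ≤ m → m ≤ n → ω m ∉ B} := by
      have : {ω : ℕ → Ω | ∀ m, 1 ≤ m → m ≤ n → ω m ∉ B}
          = ⋂ m : ℕ, ⋂ _ : 1 ≤ m, ⋂ _ : m ≤ n, (fun ω : ℕ → Ω => ω m) ⁻¹' Bᶜ := by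
        ext ω; simp [Set.mem_iInter]
      rw [this]
      exact MeasurableSet.iInter fun m => MeasurableSet.iInter fun _ =>
        MeasurableSet.iInter fun _ => (measurable_pi_apply m) hB.compl
    exact Measurable.ite hcset
      (hg.comp ((measurable_pi_apply n).prodMk (measurable_pi_apply (n + 1))))
      measurable_const
  have hstop : ∫⁻ ω, stoppedSum B g ω ∂P
      = ∑' n : ℕ, ∫⁻ ω, (if ∀ m, 1 ≤ m → m ≤ n → ω m ∉ B
          then g (ω n, ω (n + 1)) else 0) ∂P := by
    simp only [stoppedSum]
    exact lintegral_tsum fun n => (hfn n).aemeasurable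
  rw [hstop]
  have hterm := fun n => lintegral_term B hB (Φ.fst.restrict A) ℓ P hPfdd g hg n
  simp only [hterm]
  rw [hdis g hg, ENNReal.tsum_eq_iSup_nat]
  refine iSup_le fun N => ?_
  cases N with
  | zero =>
    simp only [Finset.range_zero, Finset.sum_empty]
    exact zero_le
  | succ n =>
    rw [← lintegral_finset_sum_measure]
    exact lintegral_mono' (sum_rho_le A B hA hB Φ ℓ hΩA hcons hdis n) (le_refl _)
end

section
/- If Φ is a finite unit flow from A to B (Φ(Ω×Ω)<∞), then the hitting time of B by the associated Markov chain has finite expectation, E^Φ[τ_B^Y] ≤ Φ(Ω×Ω) < ∞, and in particular τ_B^Y < ∞ P^Φ-almost surely. -/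
open MeasureTheory ProbabilityTheory ENNReal Set Filter
open scoped Classical

section BKAux

variable {Ω : Type*}

lemma bk_measurable_snoc' [MeasurableSpace Ω] (n : ℕ) :
    Measurable (fun q : (Fin (n+1) → Ω) × Ω => (Fin.snoc q.1 q.2 : Fin (n+2) → Ω)) := by
  refine measurable_pi_lambda _ fun i => ?_
  induction i using Fin.lastCases with
  | last => simpa only [Fin.snoc_last] using measurable_snd
  | cast j => simpa only [Fin.snoc_castSucc] using (measurable_fst.eval (a := j) :
      Measurable fun c : (Fin (n+1) → Ω) × Ω => c.1 j)

lemma bk_meas_step [MeasurableSpace Ω] (ℓ : Kernel Ω Ω) [IsMarkovKernel ℓ] (n : ℕ) :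
    Measurable (fun p : Fin (n+1) → Ω =>
      (ℓ (p (Fin.last n))).map (Fin.snoc (α := fun _ : Fin (n+2) => Ω) p)) := by
  apply Measure.measurable_of_measurable_coe
  intro s hs
  have hsnoc : ∀ p : Fin (n+1) → Ω,
      Measurable (Fin.snoc (α := fun _ : Fin (n+2) => Ω) p) := fun p =>
    (bk_measurable_snoc' n).comp (measurable_prodMk_left (x := p))
  simp_rw [Measure.map_apply (hsnoc _) hs]
  have ht : MeasurableSet {q : (Fin (n+1) → Ω) × Ω | (Fin.snoc q.1 q.2 : Fin (n+2) → Ω) ∈ s} :=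
    (bk_measurable_snoc' n) hs
  have h := Kernel.measurable_kernel_prodMk_left
    (κ := ℓ.comap (fun p : Fin (n+1) → Ω => p (Fin.last n)) (measurable_pi_apply _)) ht
  simpa [Kernel.comap_apply, Set.preimage] using h

/-- Paths whose coordinates `1..n` avoid `B`. -/
def bkGood (B : Set Ω) (n : ℕ) : Set (Fin (n+1) → Ω) :=
  {p | ∀ i : Fin (n+1), 1 ≤ (i : ℕ) → p i ∉ B}

lemma bkGood_measurable [MeasurableSpace Ω] {B : Set Ω} (hB : MeasurableSet B) (n : ℕ) :
    MeasurableSet (bkGood B n) := by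
  have : bkGood B n = ⋂ (i : Fin (n+1)) (_ : 1 ≤ (i : ℕ)), (fun p => p i) ⁻¹' Bᶜ := by
    ext p; simp [bkGood]
  rw [this]
  exact MeasurableSet.iInter fun i => MeasurableSet.iInter fun _ =>
    measurable_pi_apply i hB.compl

/-- Law of the `n`-th coordinate on the event that coordinates `1..n` avoid `B`. -/
noncomputable def bkRho [MeasurableSpace Ω] (B : Set Ω) (μ0 : Measure Ω) (ℓ : Kernel Ω Ω)
    (n : ℕ) : Measure Ω :=
  ((fdd μ0 ℓ n).restrict (bkGood B n)).map (fun p => p (Fin.last n))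

lemma bkRho_univ [MeasurableSpace Ω] (B : Set Ω) (μ0 : Measure Ω) (ℓ : Kernel Ω Ω) (n : ℕ) :
    bkRho B μ0 ℓ n univ = fdd μ0 ℓ n (bkGood B n) := by
  rw [bkRho, Measure.map_apply (measurable_pi_apply _) MeasurableSet.univ, preimage_univ,
    Measure.restrict_apply_univ]

lemma bkRho_zero [MeasurableSpace Ω] (B : Set Ω) (μ0 : Measure Ω) (ℓ : Kernel Ω Ω) :
    bkRho B μ0 ℓ 0 = μ0 := by
  have hgood : bkGood B 0 = univ := by
    ext p
    simp only [bkGood, mem_setOf_eq, mem_univ, iff_true]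
    intro i hi
    omega
  have hconst : Measurable (fun x : Ω => fun _ : Fin 1 => x) :=
    measurable_pi_lambda _ fun _ => measurable_id
  rw [bkRho, hgood, Measure.restrict_univ, fdd, Measure.map_map (measurable_pi_apply _) hconst]
  exact Measure.map_id

lemma bkRho_succ [MeasurableSpace Ω] {B : Set Ω} (hB : MeasurableSet B)
    (μ0 : Measure Ω) (ℓ : Kernel Ω Ω) [IsMarkovKernel ℓ] (n : ℕ)
    {C : Set Ω} (hC : MeasurableSet C) :
    bkRho B μ0 ℓ (n+1) C = ∫⁻ x, ℓ x (C ∩ Bᶜ) ∂(bkRho B μ0 ℓ n) := by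
  have hsnoc : ∀ p : Fin (n+1) → Ω,
      Measurable (Fin.snoc (α := fun _ : Fin (n+2) => Ω) p) := fun p =>
    (bk_measurable_snoc' n).comp (measurable_prodMk_left (x := p))
  have hlast : Measurable fun p : Fin (n+2) → Ω => p (Fin.last (n+1)) :=
    measurable_pi_apply _
  have hs : MeasurableSet (bkGood B (n+1) ∩ (fun p => p (Fin.last (n+1))) ⁻¹' C) :=
    (bkGood_measurable hB (n+1)).inter (hlast hC)
  have h1 : bkRho B μ0 ℓ (n+1) C
      = fdd μ0 ℓ (n+1) (bkGood B (n+1) ∩ (fun p => p (Fin.last (n+1))) ⁻¹' C) := by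
    rw [bkRho, Measure.map_apply hlast hC, Measure.restrict_apply (hlast hC), inter_comm]
  have hpre : ∀ p : Fin (n+1) → Ω,
      (Fin.snoc (α := fun _ : Fin (n+2) => Ω) p) ⁻¹'
        (bkGood B (n+1) ∩ (fun p => p (Fin.last (n+1))) ⁻¹' C)
      = {y | (p ∈ bkGood B n ∧ y ∉ B) ∧ y ∈ C} := by
    intro p
    ext y
    simp only [mem_preimage, mem_inter_iff, mem_setOf_eq, Fin.snoc_last]
    constructor
    · rintro ⟨hg, hyC⟩
      refine ⟨⟨fun i hi => ?_, ?_⟩, hyC⟩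
      · have := hg i.castSucc (by simpa using hi)
        simpa [Fin.snoc_castSucc] using this
      · have := hg (Fin.last (n+1)) (by simp)
        simpa [Fin.snoc_last] using this
    · rintro ⟨⟨hg, hyB⟩, hyC⟩
      refine ⟨fun i hi => ?_, hyC⟩
      induction i using Fin.lastCases with
      | last => simpa [Fin.snoc_last] using hyB
      | cast j => simpa [Fin.snoc_castSucc] using hg j (by simpa using hi)
  have h2 : fdd μ0 ℓ (n+1) (bkGood B (n+1) ∩ (fun p => p (Fin.last (n+1))) ⁻¹' C)
      = ∫⁻ p, (bkGood B n).indicator (fun p => ℓ (p (Fin.last n)) (C ∩ Bᶜ)) p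
          ∂(fdd μ0 ℓ n) := by
    rw [fdd, Measure.bind_apply hs (bk_meas_step ℓ n).aemeasurable]
    refine lintegral_congr fun p => ?_
    rw [Measure.map_apply (hsnoc p) hs, hpre p]
    by_cases hp : p ∈ bkGood B n
    · rw [indicator_of_mem hp]
      congr 1
      ext y
      simp [hp, mem_inter_iff, and_comm]
    · rw [indicator_of_notMem hp]
      have : {y | (p ∈ bkGood B n ∧ y ∉ B) ∧ y ∈ C} = (∅ : Set Ω) := by
        ext y; simp [hp]
      rw [this, measure_empty]
  rw [h1, h2, lintegral_indicator (bkGood_measurable hB n) _, bkRho,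
    lintegral_map (Kernel.measurable_coe ℓ (hC.inter hB.compl)) (measurable_pi_apply _)]

lemma bk_sum_rho_le [MeasurableSpace Ω] {A B : Set Ω} (hA : MeasurableSet A)
    (hB : MeasurableSet B) {Φ : Measure (Ω × Ω)} (hΦ : IsUnitFlow A B Φ)
    {ℓ : Kernel Ω Ω} [IsMarkovKernel ℓ] (hdis : Disintegrates Φ ℓ)
    (n : ℕ) {C : Set Ω} (hC : MeasurableSet C) :
    ∑ k ∈ Finset.range (n+1), bkRho B (Φ.fst.restrict A) ℓ k C ≤ Φ.fst C := by
  obtain ⟨-, -, h2, -, -, h5, -⟩ := hΦ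
  have hsnd : ∀ {C : Set Ω}, MeasurableSet C → ∫⁻ x, ℓ x C ∂Φ.fst = Φ.snd C := by
    intro C hC
    have hg : Measurable (fun p : Ω × Ω => C.indicator (fun _ => (1:ℝ≥0∞)) p.2) :=
      (measurable_one.indicator hC).comp measurable_snd
    have h := (hdis _ hg).symm
    have h1 : ∀ x, ∫⁻ y, C.indicator (fun _ => (1:ℝ≥0∞)) y ∂(ℓ x) = ℓ x C := fun x =>
      lintegral_indicator_one hC
    simp_rw [h1] at h
    rw [h]
    have h2 : (fun p : Ω × Ω => C.indicator (fun _ => (1:ℝ≥0∞)) p.2)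
        = (Prod.snd ⁻¹' C).indicator (fun _ => (1:ℝ≥0∞)) := by
      ext p; by_cases hp : p.2 ∈ C <;> simp [hp]
    rw [h2]
    exact (lintegral_indicator_one (measurable_snd hC)).trans (Measure.snd_apply hC).symm
  have hsndA : Φ.snd A = 0 := by
    rw [Measure.snd_apply hA]
    have : Prod.snd ⁻¹' A = (univ : Set Ω) ×ˢ A := by ext p; simp
    rw [this]; exact h2
  have hcons : ∀ D : Set Ω, MeasurableSet D → D ⊆ (A ∪ B)ᶜ → Φ.snd D = Φ.fst D := by
    intro D hD hsub
    rw [Measure.snd_apply hD, Measure.fst_apply hD]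
    have e1 : Prod.fst ⁻¹' D = D ×ˢ (univ : Set Ω) := by ext p; simp
    have e2 : Prod.snd ⁻¹' D = (univ : Set Ω) ×ˢ D := by ext p; simp
    rw [e1, e2, ← h5 D hD hsub]
  have key : ∀ C : Set Ω, MeasurableSet C → Φ.fst (C ∩ A) + Φ.snd (C ∩ Bᶜ) ≤ Φ.fst C := by
    intro C hC
    have hD : MeasurableSet (C ∩ Aᶜ ∩ Bᶜ) := (hC.inter hA.compl).inter hB.compl
    have hDsub : C ∩ Aᶜ ∩ Bᶜ ⊆ (A ∪ B)ᶜ := by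
      intro x hx
      simp only [mem_inter_iff, mem_compl_iff, mem_union] at hx ⊢
      tauto
    have h1 : Φ.snd (C ∩ Bᶜ) ≤ Φ.snd A + Φ.snd (C ∩ Aᶜ ∩ Bᶜ) := by
      refine le_trans (measure_mono ?_) (measure_union_le _ _)
      intro x hx
      by_cases hxA : x ∈ A
      · exact Or.inl hxA
      · exact Or.inr ⟨⟨hx.1, hxA⟩, hx.2⟩
    rw [hsndA, zero_add, hcons _ hD hDsub] at h1
    have hdisj : Disjoint (C ∩ A) (C ∩ Aᶜ ∩ Bᶜ) :=
      Set.disjoint_left.mpr fun x hx1 hx2 => hx2.1.2 hx1.2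
    calc Φ.fst (C ∩ A) + Φ.snd (C ∩ Bᶜ) ≤ Φ.fst (C ∩ A) + Φ.fst (C ∩ Aᶜ ∩ Bᶜ) :=
          add_le_add_right h1 _
      _ = Φ.fst ((C ∩ A) ∪ (C ∩ Aᶜ ∩ Bᶜ)) := (measure_union hdisj hD).symm
      _ ≤ Φ.fst C := measure_mono (by
          rintro x (hx | hx)
          · exact hx.1
          · exact hx.1.1)
  induction n generalizing C with
  | zero =>
    rw [Finset.sum_range_one, bkRho_zero, Measure.restrict_apply hC]
    exact measure_mono inter_subset_left
  | succ n ih =>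
    have hCB : MeasurableSet (C ∩ Bᶜ) := hC.inter hB.compl
    have hle : (∑ k ∈ Finset.range (n+1), bkRho B (Φ.fst.restrict A) ℓ k) ≤ Φ.fst :=
      Measure.le_iff.mpr fun s hs => by
        rw [Measure.finset_sum_apply]
        exact ih hs
    have e : ∑ k ∈ Finset.range (n+1), bkRho B (Φ.fst.restrict A) ℓ (k+1) C
        = ∫⁻ x, ℓ x (C ∩ Bᶜ)
            ∂(∑ k ∈ Finset.range (n+1), bkRho B (Φ.fst.restrict A) ℓ k) := by
      rw [lintegral_finset_sum_measure]
      exact Finset.sum_congr rfl fun k _ => bkRho_succ hB _ ℓ k hC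
    rw [Finset.sum_range_succ']
    calc (∑ k ∈ Finset.range (n+1), bkRho B (Φ.fst.restrict A) ℓ (k+1) C)
          + bkRho B (Φ.fst.restrict A) ℓ 0 C
        = (∫⁻ x, ℓ x (C ∩ Bᶜ)
            ∂(∑ k ∈ Finset.range (n+1), bkRho B (Φ.fst.restrict A) ℓ k))
            + Φ.fst (C ∩ A) := by
          rw [e, bkRho_zero, Measure.restrict_apply hC]
      _ ≤ (∫⁻ x, ℓ x (C ∩ Bᶜ) ∂Φ.fst) + Φ.fst (C ∩ A) :=
          add_le_add_left (lintegral_mono' hle le_rfl) _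
      _ = Φ.fst (C ∩ A) + Φ.snd (C ∩ Bᶜ) := by rw [hsnd hCB, add_comm]
      _ ≤ Φ.fst C := key C hC

end BKAux

/-- **Finite unit flows have integrable hitting times.** -/
theorem finite_unitFlow_hitting_time
    {Ω : Type*} [MeasurableSpace Ω] [TopologicalSpace Ω] [PolishSpace Ω] [BorelSpace Ω]
    (A B : Set Ω) (hA : MeasurableSet A) (hB : MeasurableSet B) (hAB : Disjoint A B)
    (Φ : Measure (Ω × Ω)) (hΦ : IsUnitFlow A B Φ) (hfin : Φ univ < ⊤)
    (ℓ : Kernel Ω Ω) (hℓ : IsMarkovKernel ℓ) (hdis : Disintegrates Φ ℓ)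
    (P : Measure (ℕ → Ω)) (hP : IsChainLaw (Φ.fst.restrict A) ℓ P) :
    ∫⁻ ω, hitTimeE B ω ∂P ≤ Φ univ ∧ (∀ᵐ ω ∂P, HitsB B ω) := by
  haveI := hℓ
  obtain ⟨hPmeas, hPfdd⟩ := hP
  set μ0 := Φ.fst.restrict A with hμ0
  set E : ℕ → Set (ℕ → Ω) := fun n => {ω | ∀ m, 1 ≤ m → m ≤ n → ω m ∉ B} with hEdef
  have hE : ∀ n, MeasurableSet (E n) := by
    intro n
    have : E n = ⋂ (m : ℕ) (_ : 1 ≤ m) (_ : m ≤ n), (fun ω : ℕ → Ω => ω m) ⁻¹' Bᶜ := by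
      ext ω; simp [hEdef]
    rw [this]
    exact MeasurableSet.iInter fun m => MeasurableSet.iInter fun _ =>
      MeasurableSet.iInter fun _ => measurable_pi_apply m hB.compl
  have hhit : hitTimeE B = fun ω => ∑' n, (E n).indicator (fun _ => (1:ℝ≥0∞)) ω := by
    funext ω
    refine tsum_congr fun n => ?_
    by_cases h : ∀ m, 1 ≤ m → m ≤ n → ω m ∉ B
    · rw [if_pos h, indicator_of_mem (show ω ∈ E n from h)]
    · rw [if_neg h, indicator_of_notMem (show ω ∉ E n from h)]
  have hPE : ∀ n, P (E n) = bkRho B μ0 ℓ n univ := by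
    intro n
    have hproj : Measurable (fun ω : ℕ → Ω => fun i : Fin (n+1) => ω (i : ℕ)) :=
      measurable_pi_lambda _ fun i => measurable_pi_apply _
    have hpre : E n = (fun ω : ℕ → Ω => fun i : Fin (n+1) => ω (i : ℕ)) ⁻¹' bkGood B n := by
      ext ω
      simp only [hEdef, mem_setOf_eq, mem_preimage, bkGood]
      constructor
      · intro h i hi; exact h i hi (Nat.lt_succ_iff.mp i.isLt)
      · intro h m h1 h2; exact h ⟨m, Nat.lt_succ_of_le h2⟩ h1
    rw [bkRho_univ, ← hPfdd n, Measure.map_apply hproj (bkGood_measurable hB n), ← hpre]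
  have hmain : ∫⁻ ω, hitTimeE B ω ∂P ≤ Φ univ := by
    have h1 : ∫⁻ ω, hitTimeE B ω ∂P = ∑' n, P (E n) := by
      calc ∫⁻ ω, hitTimeE B ω ∂P
          = ∫⁻ ω, ∑' n, (E n).indicator (fun _ => (1:ℝ≥0∞)) ω ∂P := by rw [hhit]
        _ = ∑' n, ∫⁻ ω, (E n).indicator (fun _ => (1:ℝ≥0∞)) ω ∂P :=
            lintegral_tsum fun n => (measurable_one.indicator (hE n)).aemeasurable
        _ = ∑' n, P (E n) := tsum_congr fun n => lintegral_indicator_one (hE n)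
    rw [h1]
    simp_rw [hPE]
    rw [ENNReal.tsum_eq_iSup_sum]
    refine iSup_le fun s => ?_
    have hsub : s ⊆ Finset.range (s.sup id + 1) := fun i hi =>
      Finset.mem_range.mpr (Nat.lt_succ_of_le (Finset.le_sup (f := id) hi))
    calc ∑ n ∈ s, bkRho B μ0 ℓ n univ
        ≤ ∑ n ∈ Finset.range (s.sup id + 1), bkRho B μ0 ℓ n univ :=
          Finset.sum_le_sum_of_subset hsub
      _ ≤ Φ.fst univ := bk_sum_rho_le hA hB hΦ hdis _ MeasurableSet.univ
      _ = Φ univ := Measure.fst_univ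
  refine ⟨hmain, ?_⟩
  have hmeas : Measurable (hitTimeE B) := by
    rw [hhit]
    exact Measurable.ennreal_tsum fun n => measurable_one.indicator (hE n)
  have hae : ∀ᵐ ω ∂P, hitTimeE B ω < ⊤ :=
    ae_lt_top hmeas (lt_of_le_of_lt hmain hfin).ne
  filter_upwards [hae] with ω hω
  by_contra hno
  apply hω.ne
  have hall : ∀ n, ∀ m, 1 ≤ m → m ≤ n → ω m ∉ B := fun n m h1 _ hmB => hno ⟨m, h1, hmB⟩
  calc hitTimeE B ω = ∑' _ : ℕ, (1:ℝ≥0∞) := tsum_congr fun n => if_pos (hall n)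
    _ = ⊤ := ENNReal.tsum_const_eq_top_of_ne_zero one_ne_zero
end

section
/- Let Φ be a unit flow from A to B with left marginal ν and associated Markov chain Y. Then for every n≥0 the sub-probability measure ν_n(C) = P^Φ(Y_n ∈ C, τ_B^Y ≥ n+1) is absolutely continuous with respect to ν. Consequently, the law of the chain Y stopped upon reaching B does not depend on the choice of the disintegrating kernel ℓ (any two kernels with Φ(dx,dy)=ν(dx)ℓ(x,dy) yield the same law of the stopped chain). -/
open MeasureTheory ProbabilityTheory ENNReal Set Filter
open scoped Classical

/-- The path `ω` stopped upon reaching `B` (at the first time `n ≥ 1` with `ω n ∈ B`). -/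
noncomputable def stoppedPath {Ω : Type*} (B : Set Ω) (ω : ℕ → Ω) (k : ℕ) : Ω :=
  if h : ∃ m, 1 ≤ m ∧ m ≤ k ∧ ω m ∈ B then ω (Nat.find h) else ω k


set_option linter.unusedSectionVars false
set_option linter.unusedVariables false

namespace BK
variable {Ω : Type*} {B : Set Ω} {ω ω' : ℕ → Ω} {k : ℕ}

lemma stoppedPath_zero : stoppedPath B ω 0 = ω 0 := by
  rw [stoppedPath, dif_neg]; rintro ⟨m, h1, h2, _⟩; omega

lemma stoppedPath_congr (h : ∀ m ≤ k, ω m = ω' m) :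
    stoppedPath B ω k = stoppedPath B ω' k := by
  unfold stoppedPath
  by_cases h1 : ∃ m, 1 ≤ m ∧ m ≤ k ∧ ω m ∈ B
  · obtain ⟨m, hm1, hm2, hm3⟩ := h1
    have h1 : ∃ m, 1 ≤ m ∧ m ≤ k ∧ ω m ∈ B := ⟨m, hm1, hm2, hm3⟩
    have h2 : ∃ m, 1 ≤ m ∧ m ≤ k ∧ ω' m ∈ B := ⟨m, hm1, hm2, (h m hm2) ▸ hm3⟩
    rw [dif_pos h1, dif_pos h2]
    have e : Nat.find h1 = Nat.find h2 := by
      apply le_antisymm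
      · obtain ⟨a1, a2, a3⟩ := Nat.find_spec h2
        exact Nat.find_le ⟨a1, a2, (h _ a2) ▸ a3⟩
      · obtain ⟨a1, a2, a3⟩ := Nat.find_spec h1
        exact Nat.find_le ⟨a1, a2, (h _ a2) ▸ a3⟩
    rw [e, h _ (Nat.find_spec h2).2.1]
  · have h2 : ¬ ∃ m, 1 ≤ m ∧ m ≤ k ∧ ω' m ∈ B := by
      rintro ⟨m, hm1, hm2, hm3⟩; exact h1 ⟨m, hm1, hm2, (h m hm2) ▸ hm3⟩
    rw [dif_neg h1, dif_neg h2, h k le_rfl]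

lemma stoppedPath_of_not_hit (h : ∀ m, 1 ≤ m → m ≤ k → ω m ∉ B) :
    stoppedPath B ω k = ω k := by
  rw [stoppedPath, dif_neg]; rintro ⟨m, h1, h2, h3⟩; exact h m h1 h2 h3

lemma stoppedPath_succ :
    stoppedPath B ω (k + 1) =
      if ∃ m, 1 ≤ m ∧ m ≤ k ∧ ω m ∈ B then stoppedPath B ω k else ω (k + 1) := by
  unfold stoppedPath
  by_cases h1 : ∃ m, 1 ≤ m ∧ m ≤ k ∧ ω m ∈ B
  · obtain ⟨m, hm1, hm2, hm3⟩ := h1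
    have h1 : ∃ m, 1 ≤ m ∧ m ≤ k ∧ ω m ∈ B := ⟨m, hm1, hm2, hm3⟩
    have h2 : ∃ m, 1 ≤ m ∧ m ≤ k + 1 ∧ ω m ∈ B := ⟨m, hm1, by omega, hm3⟩
    rw [if_pos h1, dif_pos h2, dif_pos h1]
    congr 1
    obtain ⟨a1, a2, a3⟩ := Nat.find_spec h2
    obtain ⟨b1, b2, b3⟩ := Nat.find_spec h1
    have hle : Nat.find h2 ≤ Nat.find h1 := Nat.find_le ⟨b1, by omega, b3⟩
    exact le_antisymm hle (Nat.find_le ⟨a1, by omega, a3⟩)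
  · rw [if_neg h1]
    by_cases h3 : ω (k + 1) ∈ B
    · have h2 : ∃ m, 1 ≤ m ∧ m ≤ k + 1 ∧ ω m ∈ B := ⟨k + 1, by omega, le_rfl, h3⟩
      rw [dif_pos h2]
      have e : Nat.find h2 = k + 1 := by
        obtain ⟨a1, a2, a3⟩ := Nat.find_spec h2
        rcases Nat.lt_or_ge (Nat.find h2) (k + 1) with hlt | hge
        · exact absurd ⟨Nat.find h2, a1, by omega, a3⟩ h1
        · omega
      rw [e]
    · rw [dif_neg]
      rintro ⟨m, hm1, hm2, hm3⟩
      rcases Nat.lt_or_ge m (k + 1) with hlt | hge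
      · exact h1 ⟨m, hm1, by omega, hm3⟩
      · have : m = k + 1 := by omega
        exact h3 (this ▸ hm3)

lemma stoppedPath_eq_of_find (h : ∃ m, 1 ≤ m ∧ m ≤ k ∧ ω m ∈ B) :
    stoppedPath B (ω := ω) (Nat.find h) = ω (Nat.find h) := by
  obtain ⟨a1, a2, a3⟩ := Nat.find_spec h
  have h' : ∃ m, 1 ≤ m ∧ m ≤ Nat.find h ∧ ω m ∈ B := ⟨Nat.find h, a1, le_rfl, a3⟩
  rw [stoppedPath, dif_pos h']
  congr 1
  apply le_antisymm
  · exact Nat.find_le ⟨a1, le_rfl, a3⟩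
  · obtain ⟨b1, b2, b3⟩ := Nat.find_spec h'
    exact Nat.find_le ⟨b1, by omega, b3⟩

section M1
variable [MeasurableSpace Ω]
lemma measurable_hitEvent (hB : MeasurableSet B) (k : ℕ) :
    MeasurableSet {ω : ℕ → Ω | ∃ m, 1 ≤ m ∧ m ≤ k ∧ ω m ∈ B} := by
  have : {ω : ℕ → Ω | ∃ m, 1 ≤ m ∧ m ≤ k ∧ ω m ∈ B} =
      ⋃ m, ⋃ (_ : 1 ≤ m), ⋃ (_ : m ≤ k), (fun ω : ℕ → Ω => ω m) ⁻¹' B := by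
    ext ω
    simp only [Set.mem_setOf_eq, Set.mem_iUnion, Set.mem_preimage]
    tauto
  rw [this]
  exact MeasurableSet.iUnion fun m => MeasurableSet.iUnion fun _ =>
    MeasurableSet.iUnion fun _ => (measurable_pi_apply m) hB

lemma measurable_stoppedPath_coord (hB : MeasurableSet B) (k : ℕ) :
    Measurable fun ω : ℕ → Ω => stoppedPath B ω k := by
  induction k with
  | zero => simpa [stoppedPath_zero] using measurable_pi_apply 0
  | succ k ih =>
    have : (fun ω : ℕ → Ω => stoppedPath B ω (k + 1)) =
        fun ω => if ω ∈ {ω : ℕ → Ω | ∃ m, 1 ≤ m ∧ m ≤ k ∧ ω m ∈ B}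
          then stoppedPath B ω k else ω (k + 1) := by
      funext ω; rw [stoppedPath_succ]; rfl
    rw [this]
    exact Measurable.ite (measurable_hitEvent hB k) ih (measurable_pi_apply (k + 1))

lemma measurable_stoppedPath (hB : MeasurableSet B) :
    Measurable (stoppedPath B : (ℕ → Ω) → ℕ → Ω) :=
  measurable_pi_lambda _ fun k => measurable_stoppedPath_coord hB k


end M1

/-- Projection to the first `N+1` coordinates. -/
def proj (Ω : Type*) (N : ℕ) : (ℕ → Ω) → Fin (N + 1) → Ω := fun ω i => ω i

/-- Extension of a finite path to an infinite one (constant after `N`). -/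
def ext' {Ω : Type*} (N : ℕ) (p : Fin (N + 1) → Ω) : ℕ → Ω :=
  fun m => p ⟨min m N, by omega⟩

/-- The stopping map on finite paths. -/
noncomputable def stopF (B : Set Ω) (N : ℕ) (p : Fin (N + 1) → Ω) : Fin (N + 1) → Ω :=
  fun i => stoppedPath B (ext' N p) i

/-- The finite path `p` hits `B` at some time in `[1, N]`. -/
def HitP (B : Set Ω) (N : ℕ) (p : Fin (N + 1) → Ω) : Prop :=
  ∃ m, 1 ≤ m ∧ m ≤ N ∧ ext' N p m ∈ B

lemma ext'_apply_le {N : ℕ} (p : Fin (N + 1) → Ω) {m : ℕ} (hm : m ≤ N) (h2 : m < N + 1) :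
    ext' N p m = p ⟨m, h2⟩ := by
  simp only [ext']; congr 1; exact Fin.ext (by simp [Nat.min_eq_left hm])

lemma ext'_proj (ω : ℕ → Ω) (N : ℕ) {m : ℕ} (hm : m ≤ N) :
    ext' N (proj Ω N ω) m = ω m := by
  rw [ext'_apply_le _ hm (by omega)]; rfl

lemma snoc_eval_lt {N : ℕ} (p : Fin (N + 1) → Ω) (y : Ω) {m : ℕ} (hm : m < N + 1)
    (hm2 : m < N + 2) : (Fin.snoc p y : Fin (N + 2) → Ω) ⟨m, hm2⟩ = p ⟨m, hm⟩ := by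
  have h : (⟨m, hm2⟩ : Fin (N + 2)) = Fin.castSucc ⟨m, hm⟩ := rfl
  rw [h, Fin.snoc_castSucc]

lemma ext'_snoc {N : ℕ} (p : Fin (N + 1) → Ω) (y : Ω) (m : ℕ) :
    ext' (N + 1) (Fin.snoc p y) m = if m ≤ N then ext' N p m else y := by
  by_cases h : m ≤ N
  · rw [if_pos h, ext'_apply_le _ (by omega : m ≤ N + 1) (by omega),
      snoc_eval_lt p y (by omega), ext'_apply_le _ h (by omega)]
  · rw [if_neg h]
    have h1 : ext' (N + 1) (Fin.snoc p y) m
        = (Fin.snoc p y : Fin (N + 2) → Ω) ⟨min m (N + 1), by omega⟩ := rfl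
    have h2 : (⟨min m (N + 1), by omega⟩ : Fin (N + 2)) = Fin.last (N + 1) := by
      apply Fin.ext
      show min m (N + 1) = (Fin.last (N + 1) : Fin (N + 2)).val
      rw [Fin.val_last]; omega
    rw [h1, h2, Fin.snoc_last]

lemma proj_stoppedPath (ω : ℕ → Ω) (N : ℕ) :
    proj Ω N (stoppedPath B ω) = stopF B N (proj Ω N ω) := by
  funext i
  show stoppedPath B ω i = stoppedPath B (ext' N (proj Ω N ω)) i
  exact stoppedPath_congr fun m hm => (ext'_proj ω N (le_trans hm (by omega : (i : ℕ) ≤ N))).symm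

lemma stopF_of_not_hit {N : ℕ} {p : Fin (N + 1) → Ω} (h : ¬ HitP B N p) :
    stopF B N p = p := by
  funext i
  show stoppedPath B (ext' N p) i = p i
  rw [stoppedPath_of_not_hit fun m h1 h2 hm =>
    h ⟨m, h1, le_trans h2 (by omega), hm⟩]
  rw [ext'_apply_le _ (by omega : (i : ℕ) ≤ N) i.isLt]

lemma hitP_stopF {N : ℕ} {p : Fin (N + 1) → Ω} (h : HitP B N p) :
    HitP B N (stopF B N p) := by
  set m0 := Nat.find h with hm0
  obtain ⟨a1, a2, a3⟩ := Nat.find_spec h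
  refine ⟨m0, a1, a2, ?_⟩
  have he : ext' N (stopF B N p) m0 = stopF B N p ⟨m0, by omega⟩ :=
    ext'_apply_le _ a2 (by omega)
  rw [he]
  show stoppedPath B (ext' N p) ((⟨m0, by omega⟩ : Fin (N + 1)) : ℕ) ∈ B
  have hv : ((⟨m0, by omega⟩ : Fin (N + 1)) : ℕ) = m0 := rfl
  rw [hv, hm0, stoppedPath_eq_of_find h]
  exact a3

lemma stopF_snoc_not_hit {N : ℕ} {p : Fin (N + 1) → Ω} (h : ¬ HitP B N p) (y : Ω) :
    stopF B (N + 1) (Fin.snoc p y) = Fin.snoc p y := by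
  have hnh : ∀ m, 1 ≤ m → m ≤ N → ext' (N + 1) (Fin.snoc p y) m ∉ B := by
    intro m h1 h2 hm
    rw [ext'_snoc, if_pos h2] at hm
    exact h ⟨m, h1, h2, hm⟩
  funext i
  show stoppedPath B (ext' (N + 1) (Fin.snoc p y)) i = (Fin.snoc p y : Fin (N + 2) → Ω) i
  rcases Nat.lt_or_ge (i : ℕ) (N + 1) with hlt | hge
  · rw [stoppedPath_of_not_hit fun m h1 h2 => hnh m h1 (by omega)]
    have hi : i = Fin.castSucc ⟨(i : ℕ), hlt⟩ := Fin.ext rfl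
    rw [hi, Fin.snoc_castSucc]
    have hc : ((Fin.castSucc ⟨(i : ℕ), hlt⟩ : Fin (N + 2)) : ℕ) = (i : ℕ) := rfl
    rw [hc, ext'_snoc, if_pos (by omega)]
    exact ext'_apply_le _ (by omega) hlt
  · have hi : i = Fin.last (N + 1) := Fin.ext (by rw [Fin.val_last]; omega)
    rw [hi, Fin.snoc_last, Fin.val_last, stoppedPath_succ, if_neg, ext'_snoc,
      if_neg (by omega)]
    rintro ⟨m, h1, h2, h3⟩
    exact hnh m h1 h2 h3

lemma stopF_snoc_hit {N : ℕ} {p : Fin (N + 1) → Ω} (h : HitP B N p) (y : Ω) :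
    stopF B (N + 1) (Fin.snoc p y) =
      Fin.snoc (stopF B N p) (stopF B N p (Fin.last N)) := by
  funext i
  show stoppedPath B (ext' (N + 1) (Fin.snoc p y)) i
    = (Fin.snoc (stopF B N p) (stopF B N p (Fin.last N)) : Fin (N + 2) → Ω) i
  rcases Nat.lt_or_ge (i : ℕ) (N + 1) with hlt | hge
  · have hi : i = Fin.castSucc ⟨(i : ℕ), hlt⟩ := Fin.ext rfl
    rw [hi, Fin.snoc_castSucc]
    have hc : ((Fin.castSucc ⟨(i : ℕ), hlt⟩ : Fin (N + 2)) : ℕ) = (i : ℕ) := rfl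
    rw [hc]
    exact stoppedPath_congr fun m hm => by rw [ext'_snoc, if_pos (by omega)]
  · have hi : i = Fin.last (N + 1) := Fin.ext (by rw [Fin.val_last]; omega)
    rw [hi, Fin.snoc_last, Fin.val_last, stoppedPath_succ, if_pos ?hit]
    case hit =>
      obtain ⟨m, a1, a2, a3⟩ := h
      exact ⟨m, a1, a2, by rw [ext'_snoc, if_pos a2]; exact a3⟩
    show _ = stoppedPath B (ext' N p) ((Fin.last N : Fin (N + 1)) : ℕ)
    rw [Fin.val_last]
    exact stoppedPath_congr fun m hm => by rw [ext'_snoc, if_pos (by omega)]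


section Meas
variable [MeasurableSpace Ω] {A C D G : Set Ω} {Φ : Measure (Ω × Ω)} {ℓ ℓ' : Kernel Ω Ω}

lemma measurable_snoc_joint (n : ℕ) :
    Measurable fun q : (Fin (n + 1) → Ω) × Ω => (Fin.snoc q.1 q.2 : Fin (n + 2) → Ω) := by
  apply measurable_pi_lambda
  intro j
  refine Fin.lastCases ?_ ?_ j
  · simp only [Fin.snoc_last]; exact measurable_snd
  · intro i; simp only [Fin.snoc_castSucc]
    exact (measurable_pi_apply i).comp measurable_fst

lemma measurable_snoc_right {n : ℕ} (p : Fin (n + 1) → Ω) :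
    Measurable fun y : Ω => (Fin.snoc p y : Fin (n + 2) → Ω) :=
  (measurable_snoc_joint n).comp measurable_prodMk_left

lemma meas_ker_snoc (ℓ : Kernel Ω Ω) [IsSFiniteKernel ℓ] {n : ℕ} {s : Set (Fin (n + 2) → Ω)}
    (hs : MeasurableSet s) :
    Measurable fun p : Fin (n + 1) → Ω =>
      ℓ (p (Fin.last n)) {y | (Fin.snoc p y : Fin (n + 2) → Ω) ∈ s} := by
  have hW : MeasurableSet {q : (Fin (n + 1) → Ω) × Ω |
      (Fin.snoc q.1 q.2 : Fin (n + 2) → Ω) ∈ s} := (measurable_snoc_joint n) hs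
  have := Kernel.measurable_kernel_prodMk_left
    (κ := ℓ.comap (fun p : Fin (n + 1) → Ω => p (Fin.last n)) (measurable_pi_apply _)) hW
  simpa [Kernel.comap_apply] using this

lemma measurable_fdd_step (ℓ : Kernel Ω Ω) [IsSFiniteKernel ℓ] (n : ℕ) :
    Measurable fun p : Fin (n + 1) → Ω =>
      ((ℓ (p (Fin.last n))).map (Fin.snoc p) : Measure (Fin (n + 2) → Ω)) := by
  refine Measure.measurable_measure.mpr fun s hs => ?_
  have : (fun p : Fin (n + 1) → Ω => (ℓ (p (Fin.last n))).map (Fin.snoc p) s)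
      = fun p => ℓ (p (Fin.last n)) {y | (Fin.snoc p y : Fin (n + 2) → Ω) ∈ s} := by
    funext p
    rw [Measure.map_apply (measurable_snoc_right p) hs]
    rfl
  rw [this]
  exact meas_ker_snoc ℓ hs

lemma fdd_succ_apply (μ0 : Measure Ω) (ℓ : Kernel Ω Ω) [IsSFiniteKernel ℓ] (n : ℕ)
    {s : Set (Fin (n + 2) → Ω)} (hs : MeasurableSet s) :
    fdd μ0 ℓ (n + 1) s
      = ∫⁻ p, ℓ (p (Fin.last n)) {y | (Fin.snoc p y : Fin (n + 2) → Ω) ∈ s}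
          ∂(fdd μ0 ℓ n) := by
  show ((fdd μ0 ℓ n).bind fun p => (ℓ (p (Fin.last n))).map (Fin.snoc p)) s = _
  rw [Measure.bind_apply hs (measurable_fdd_step ℓ n).aemeasurable]
  refine lintegral_congr fun p => ?_
  rw [Measure.map_apply (measurable_snoc_right p) hs]
  rfl

lemma dis_prod (hdis : Disintegrates Φ ℓ) (hC : MeasurableSet C) (hD : MeasurableSet D) :
    Φ (C ×ˢ D) = ∫⁻ x in C, ℓ x D ∂Φ.fst := by
  have hind : Measurable ((C ×ˢ D).indicator (fun _ => (1 : ℝ≥0∞))) :=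
    measurable_const.indicator (hC.prod hD)
  have h := hdis _ hind
  rw [lintegral_indicator_const (hC.prod hD), one_mul] at h
  rw [h]
  have : ∀ x, ∫⁻ y, (C ×ˢ D).indicator (fun _ => (1 : ℝ≥0∞)) (x, y) ∂(ℓ x)
      = C.indicator (fun x => ℓ x D) x := by
    intro x
    by_cases hx : x ∈ C
    · have : ∀ y, (C ×ˢ D).indicator (fun _ => (1 : ℝ≥0∞)) (x, y)
          = D.indicator (fun _ => 1) y := by
        intro y; by_cases hy : y ∈ D <;> simp [indicator, hx, hy]
      simp only [this]
      rw [lintegral_indicator_const hD, one_mul]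
      simp [indicator, hx]
    · have : ∀ y, (C ×ˢ D).indicator (fun _ => (1 : ℝ≥0∞)) (x, y) = 0 := by
        intro y; simp [indicator, hx]
      simp [this, indicator, hx]
  simp only [this]
  rw [lintegral_indicator hC]

lemma nu_sigmaFinite [SigmaFinite Φ] [IsMarkovKernel ℓ] (hdis : Disintegrates Φ ℓ) :
    SigmaFinite Φ.fst := by
  set f : ℕ → Ω → ℝ≥0∞ := fun n x => ℓ x (Prod.mk x ⁻¹' spanningSets Φ n) with hf
  have hfm : ∀ n, Measurable (f n) := fun n =>
    Kernel.measurable_kernel_prodMk_left (measurableSet_spanningSets Φ n)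
  have hint : ∀ n, ∫⁻ x, f n x ∂Φ.fst = Φ (spanningSets Φ n) := by
    intro n
    have hE := measurableSet_spanningSets Φ n
    have h := hdis _ (measurable_const.indicator hE :
      Measurable ((spanningSets Φ n).indicator (fun _ => (1 : ℝ≥0∞))))
    rw [lintegral_indicator_const hE, one_mul] at h
    have hxy : ∀ x, ∫⁻ y, (spanningSets Φ n).indicator (fun _ => (1 : ℝ≥0∞)) (x, y) ∂(ℓ x)
        = f n x := by
      intro x
      have : ∀ y, (spanningSets Φ n).indicator (fun _ => (1 : ℝ≥0∞)) (x, y)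
          = (Prod.mk x ⁻¹' spanningSets Φ n).indicator (fun _ => (1 : ℝ≥0∞)) y := by
        intro y
        by_cases hy : (x, y) ∈ spanningSets Φ n <;> simp [indicator, hy, Set.mem_preimage]
      simp only [this]
      rw [lintegral_indicator_const (measurable_prodMk_left hE), one_mul]
    rw [h]
    exact lintegral_congr fun x => (hxy x).symm
  have hsup : ∀ x, (⨆ n, f n x) = 1 := by
    intro x
    have hmono : Monotone fun n => Prod.mk x ⁻¹' spanningSets Φ n :=
      fun m n hmn => Set.preimage_mono (monotone_spanningSets Φ hmn)
    have hU : ⋃ n, Prod.mk x ⁻¹' spanningSets Φ n = univ := by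
      rw [← Set.preimage_iUnion, iUnion_spanningSets, Set.preimage_univ]
    have := Directed.measure_iUnion (μ := ℓ x) hmono.directed_le
    rw [hU] at this
    rw [hf]
    simp only
    rw [← this, measure_univ]
  refine Measure.sigmaFinite_of_countable
    (S := Set.range fun n => {x | 2⁻¹ < f n x}) (Set.countable_range _) ?_ ?_
  · rintro s ⟨n, rfl⟩
    have hm : 2⁻¹ * Φ.fst {x | 2⁻¹ ≤ f n x} ≤ ∫⁻ x, f n x ∂Φ.fst :=
      mul_meas_ge_le_lintegral (hfm n) 2⁻¹
    rw [hint n] at hm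
    have hlt : Φ.fst {x | 2⁻¹ ≤ f n x} < ⊤ := by
      by_contra hc
      push_neg at hc
      rw [top_le_iff.mp hc, ENNReal.mul_top (by norm_num)] at hm
      exact absurd (top_le_iff.mp hm) (measure_spanningSets_lt_top Φ n).ne
    exact lt_of_le_of_lt (measure_mono (show {x | 2⁻¹ < f n x} ⊆ {x | 2⁻¹ ≤ f n x}
      from fun x hx => (le_of_lt hx : 2⁻¹ ≤ f n x))) hlt
  · apply Set.eq_univ_of_forall
    intro x
    have h1 : (2⁻¹ : ℝ≥0∞) < ⨆ n, f n x := by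
      rw [hsup x]
      exact ENNReal.inv_lt_one.mpr one_lt_two
    obtain ⟨n, hn⟩ := lt_iSup_iff.mp h1
    exact Set.mem_sUnion.mpr ⟨_, ⟨n, rfl⟩, hn⟩

lemma fst_apply_prod (hD : MeasurableSet D) : Φ.fst D = Φ (D ×ˢ univ) := by
  rw [Measure.fst_apply hD]
  congr 1
  ext p
  simp [Set.mem_prod]

lemma exists_good_set [MeasurableSpace.CountablyGenerated Ω] [SigmaFinite Φ.fst]
    [IsMarkovKernel ℓ] [IsMarkovKernel ℓ']
    (hdis : Disintegrates Φ ℓ) (hdis' : Disintegrates Φ ℓ') :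
    ∃ G : Set Ω, MeasurableSet G ∧ Φ.fst Gᶜ = 0 ∧ ∀ x ∈ G, ℓ x = ℓ' x := by
  set f : ℕ → Set Ω := MeasurableSpace.natGeneratingSequence Ω with hfdef
  set K : Finset ℕ → Set Ω := fun F => ⋂ i ∈ F, f i with hK
  have hKmeas : ∀ F, MeasurableSet (K F) := fun F =>
    MeasurableSet.biInter (Finset.countable_toSet F) fun i _ =>
      MeasurableSpace.measurableSet_natGeneratingSequence i
  have hae : ∀ F : Finset ℕ, Φ.fst {x | ℓ x (K F) ≠ ℓ' x (K F)} = 0 := by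
    intro F
    have hmeq : (fun x => ℓ x (K F)) =ᵐ[Φ.fst] fun x => ℓ' x (K F) := by
      refine ae_eq_of_forall_setLIntegral_eq_of_sigmaFinite
        (Kernel.measurable_coe ℓ (hKmeas F)) (Kernel.measurable_coe ℓ' (hKmeas F)) ?_
      intro C hC _
      rw [← dis_prod hdis hC (hKmeas F), ← dis_prod hdis' hC (hKmeas F)]
    exact hmeq
  set G : Set Ω := ⋂ F : Finset ℕ, {x | ℓ x (K F) = ℓ' x (K F)} with hG
  refine ⟨G, ?_, ?_, ?_⟩
  · refine MeasurableSet.iInter fun F => ?_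
    have : {x | ℓ x (K F) = ℓ' x (K F)}
        = {x | ℓ x (K F) ≤ ℓ' x (K F)} ∩ {x | ℓ' x (K F) ≤ ℓ x (K F)} := by
      ext x; simp only [Set.mem_setOf_eq, Set.mem_inter_iff, le_antisymm_iff]
    rw [this]
    exact (measurableSet_le (Kernel.measurable_coe ℓ (hKmeas F))
        (Kernel.measurable_coe ℓ' (hKmeas F))).inter
      (measurableSet_le (Kernel.measurable_coe ℓ' (hKmeas F))
        (Kernel.measurable_coe ℓ (hKmeas F)))
  · rw [hG, Set.compl_iInter]
    exact measure_iUnion_null fun F => hae F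
  · intro x hx
    have hxF : ∀ F : Finset ℕ, ℓ x (K F) = ℓ' x (K F) := by
      intro F
      exact Set.mem_iInter.mp hx F
    have hgen : (inferInstance : MeasurableSpace Ω)
        = MeasurableSpace.generateFrom (Set.range K) := by
      apply le_antisymm
      · conv_lhs => rw [← MeasurableSpace.generateFrom_natGeneratingSequence Ω]
        apply MeasurableSpace.generateFrom_mono
        rintro s ⟨i, rfl⟩
        exact ⟨{i}, by simp [hK, hfdef]⟩
      · apply MeasurableSpace.generateFrom_le
        rintro s ⟨F, rfl⟩
        exact hKmeas F
    have hpi : IsPiSystem (Set.range K) := by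
      rintro s ⟨F₁, rfl⟩ t ⟨F₂, rfl⟩ -
      refine ⟨F₁ ∪ F₂, ?_⟩
      rw [hK]
      simp only
      ext z
      simp only [Set.mem_iInter, Finset.mem_union, Set.mem_inter_iff]
      constructor
      · intro hz
        exact ⟨fun i hi => hz i (Or.inl hi), fun i hi => hz i (Or.inr hi)⟩
      · rintro ⟨h1, h2⟩ i (hi | hi)
        · exact h1 i hi
        · exact h2 i hi
    refine MeasureTheory.ext_of_generate_finite (Set.range K) hgen hpi ?_ ?_
    · rintro s ⟨F, rfl⟩
      exact hxF F
    · simp [measure_univ]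

lemma right_marg_null (hΦ : IsUnitFlow A B Φ) (hA : MeasurableSet A)
    (hB : MeasurableSet B) (hC : MeasurableSet C) (hν : Φ.fst C = 0) :
    Φ (univ ×ˢ (C ∩ Bᶜ)) = 0 := by
  obtain ⟨_, _, hA0, _, _, hbal, _⟩ := hΦ
  have hsub : C ∩ Bᶜ ⊆ (C ∩ A) ∪ (C ∩ (A ∪ B)ᶜ) := by
    rintro x ⟨hxC, hxB⟩
    by_cases hxA : x ∈ A
    · exact Or.inl ⟨hxC, hxA⟩
    · exact Or.inr ⟨hxC, fun hx => hx.elim hxA hxB⟩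
  have h1 : Φ (univ ×ˢ (C ∩ A)) = 0 :=
    measure_mono_null (Set.prod_mono le_rfl Set.inter_subset_right) hA0
  have h2 : Φ (univ ×ˢ (C ∩ (A ∪ B)ᶜ)) = 0 := by
    rw [← hbal _ (hC.inter (hA.union hB).compl) Set.inter_subset_right,
      ← fst_apply_prod (hC.inter (hA.union hB).compl)]
    exact measure_mono_null Set.inter_subset_left hν
  have h3 : Φ (univ ×ˢ ((C ∩ A) ∪ (C ∩ (A ∪ B)ᶜ))) = 0 := by
    rw [Set.prod_union]
    exact le_antisymm (le_trans (measure_union_le _ _) (by rw [h1, h2]; simp)) zero_le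
  exact measure_mono_null (Set.prod_mono Set.Subset.rfl hsub) h3

/-- The bad event at time `n`. -/
def SC (B C : Set Ω) (n : ℕ) : Set (Fin (n + 1) → Ω) :=
  {p | p (Fin.last n) ∈ C ∧ ∀ i : Fin (n + 1), 1 ≤ (i : ℕ) → p i ∉ B}

lemma meas_SC (hB : MeasurableSet B) (hC : MeasurableSet C) (n : ℕ) :
    MeasurableSet (SC B C n) := by
  have h1 : SC B C n = ((fun p : Fin (n + 1) → Ω => p (Fin.last n)) ⁻¹' C)
      ∩ ⋂ i : Fin (n + 1), ⋂ (_ : 1 ≤ (i : ℕ)),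
        (fun p : Fin (n + 1) → Ω => p i) ⁻¹' Bᶜ := by
    ext p
    simp [SC, Set.mem_iInter, Set.mem_preimage]
  rw [h1]
  exact ((measurable_pi_apply _) hC).inter
    (MeasurableSet.iInter fun i => MeasurableSet.iInter fun _ =>
      (measurable_pi_apply _) hB.compl)

lemma snoc_mem_SC {n : ℕ} {p : Fin (n + 1) → Ω} {y : Ω} :
    (Fin.snoc p y : Fin (n + 2) → Ω) ∈ SC B C (n + 1)
      ↔ y ∈ C ∧ y ∉ B ∧ ∀ i : Fin (n + 1), 1 ≤ (i : ℕ) → p i ∉ B := by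
  constructor
  · rintro ⟨h1, h2⟩
    rw [Fin.snoc_last] at h1
    refine ⟨h1, ?_, ?_⟩
    · have := h2 (Fin.last (n + 1)) (by rw [Fin.val_last]; omega)
      rwa [Fin.snoc_last] at this
    · intro i hi
      have := h2 (Fin.castSucc i) (by rwa [Fin.coe_castSucc])
      rwa [Fin.snoc_castSucc] at this
  · rintro ⟨h1, h2, h3⟩
    refine ⟨by rw [Fin.snoc_last]; exact h1, fun i => ?_⟩
    refine Fin.lastCases ?_ ?_ i
    · intro _; rwa [Fin.snoc_last]
    · intro j hj
      rw [Fin.snoc_castSucc]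
      exact h3 j (by rwa [Fin.coe_castSucc] at hj)

lemma fdd_null (hA : MeasurableSet A) (hB : MeasurableSet B)
    (hΦ : IsUnitFlow A B Φ) (ℓ : Kernel Ω Ω) [IsMarkovKernel ℓ]
    (hdis : Disintegrates Φ ℓ) :
    ∀ n, ∀ C : Set Ω, MeasurableSet C → Φ.fst C = 0 →
      fdd (Φ.fst.restrict A) ℓ n (SC B C n) = 0 := by
  intro n
  induction n with
  | zero =>
    intro C hC hνC
    have hmap : Measurable fun x : Ω => (fun _ : Fin 1 => x) :=
      measurable_pi_lambda _ fun _ => measurable_id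
    show (Φ.fst.restrict A).map (fun x => fun _ => x) (SC B C 0) = 0
    rw [Measure.map_apply hmap (meas_SC hB hC 0)]
    have hpre : (fun x : Ω => fun _ : Fin 1 => x) ⁻¹' SC B C 0 = C := by
      ext x
      simp only [SC, Set.mem_preimage, Set.mem_setOf_eq]
      exact ⟨fun h => h.1, fun hx => ⟨hx, fun i hi => by omega⟩⟩
    rw [hpre, Measure.restrict_apply hC]
    exact measure_mono_null Set.inter_subset_left hνC
  | succ n ih =>
    intro C hC hνC
    set N0 : Set Ω := {x | ℓ x (C ∩ Bᶜ) ≠ 0} with hN0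
    have hCB : MeasurableSet (C ∩ Bᶜ) := hC.inter hB.compl
    have hN0m : MeasurableSet N0 := by
      have : N0 = ((fun x => ℓ x (C ∩ Bᶜ)) ⁻¹' {0})ᶜ := by
        ext x; simp [hN0]
      rw [this]
      exact ((Kernel.measurable_coe ℓ hCB) (measurableSet_singleton 0)).compl
    have hN0null : Φ.fst N0 = 0 := by
      have hint : ∫⁻ x, ℓ x (C ∩ Bᶜ) ∂Φ.fst = 0 := by
        have := dis_prod (D := C ∩ Bᶜ) hdis MeasurableSet.univ hCB
        rw [setLIntegral_univ] at this
        rw [← this]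
        exact right_marg_null hΦ hA hB hC hνC
      have hae := (lintegral_eq_zero_iff (Kernel.measurable_coe ℓ hCB)).mp hint
      have := hae
      rw [Filter.EventuallyEq, ae_iff] at this
      simpa [hN0] using this
    have hT := ih N0 hN0m hN0null
    rw [fdd_succ_apply _ _ _ (meas_SC hB hC (n + 1))]
    refine le_antisymm ?_ zero_le
    have hle : ∀ p : Fin (n + 1) → Ω,
        ℓ (p (Fin.last n)) {y | (Fin.snoc p y : Fin (n + 2) → Ω) ∈ SC B C (n + 1)}
          ≤ (SC B N0 n).indicator (fun _ => (1 : ℝ≥0∞)) p := by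
      intro p
      by_cases hQ : ∀ i : Fin (n + 1), 1 ≤ (i : ℕ) → p i ∉ B
      · by_cases hN : p (Fin.last n) ∈ N0
        · have hmem : p ∈ SC B N0 n := ⟨hN, hQ⟩
          rw [Set.indicator_of_mem hmem]
          exact prob_le_one
        · have hz : ℓ (p (Fin.last n)) (C ∩ Bᶜ) = 0 := not_ne_iff.mp hN
          have hsub : {y | (Fin.snoc p y : Fin (n + 2) → Ω) ∈ SC B C (n + 1)} ⊆ C ∩ Bᶜ :=
            fun y hy => ⟨(snoc_mem_SC.mp hy).1, (snoc_mem_SC.mp hy).2.1⟩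
          exact le_trans (le_trans (measure_mono hsub) (le_of_eq hz)) zero_le
      · have hemp : {y | (Fin.snoc p y : Fin (n + 2) → Ω) ∈ SC B C (n + 1)} = ∅ :=
          Set.eq_empty_iff_forall_notMem.mpr fun y hy => hQ (snoc_mem_SC.mp hy).2.2
        rw [hemp]
        simp
    calc ∫⁻ p, ℓ (p (Fin.last n)) {y | (Fin.snoc p y : Fin (n + 2) → Ω) ∈ SC B C (n + 1)}
          ∂(fdd (Φ.fst.restrict A) ℓ n)
        ≤ ∫⁻ p, (SC B N0 n).indicator (fun _ => (1 : ℝ≥0∞)) p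
          ∂(fdd (Φ.fst.restrict A) ℓ n) := lintegral_mono hle
      _ = fdd (Φ.fst.restrict A) ℓ n (SC B N0 n) := by
          rw [lintegral_indicator_const (meas_SC hB hN0m n), one_mul]
      _ = 0 := hT


lemma not_hitP_iff {N : ℕ} {p : Fin (N + 1) → Ω} :
    ¬ HitP B N p ↔ ∀ i : Fin (N + 1), 1 ≤ (i : ℕ) → p i ∉ B := by
  constructor
  · intro h i hi hpB
    exact h ⟨(i : ℕ), hi, by omega, by rw [ext'_apply_le _ (by omega) i.isLt]; exact hpB⟩
  · rintro h ⟨m, h1, h2, h3⟩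
    rw [ext'_apply_le _ h2 (by omega)] at h3
    exact h ⟨m, by omega⟩ h1 h3

lemma measurable_ext' (N : ℕ) : Measurable (ext' (Ω := Ω) N) :=
  measurable_pi_lambda _ fun m => measurable_pi_apply _

lemma measurable_stopF (hB : MeasurableSet B) (N : ℕ) :
    Measurable (stopF B N : (Fin (N + 1) → Ω) → Fin (N + 1) → Ω) :=
  measurable_pi_lambda _ fun i =>
    (measurable_stoppedPath_coord hB (i : ℕ)).comp (measurable_ext' N)

lemma measurable_hitSet (hB : MeasurableSet B) (N : ℕ) :
    MeasurableSet {p : Fin (N + 1) → Ω | HitP B N p} := by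
  have : {p : Fin (N + 1) → Ω | HitP B N p}
      = ⋃ m, ⋃ (_ : 1 ≤ m), ⋃ (_ : m ≤ N),
          (fun p : Fin (N + 1) → Ω => ext' N p m) ⁻¹' B := by
    ext p
    simp only [Set.mem_setOf_eq, Set.mem_iUnion, Set.mem_preimage, HitP]
    tauto
  rw [this]
  exact MeasurableSet.iUnion fun m => MeasurableSet.iUnion fun _ =>
    MeasurableSet.iUnion fun _ => (measurable_pi_apply _) hB

lemma stopF_preimage_SC (hB : MeasurableSet B) (N : ℕ) (C : Set Ω) :
    stopF B N ⁻¹' SC B C N = SC B C N := by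
  ext q
  constructor
  · intro hq
    have hnh : ¬ HitP B N (stopF B N q) := not_hitP_iff.mpr hq.2
    have hnq : ¬ HitP B N q := fun h => hnh (hitP_stopF h)
    rwa [Set.mem_preimage, stopF_of_not_hit hnq] at hq
  · intro hq
    have hnq : ¬ HitP B N q := not_hitP_iff.mpr hq.2
    rwa [Set.mem_preimage, stopF_of_not_hit hnq]

/-- Key induction: the stopped finite-dimensional laws agree. -/
lemma stopped_fdd_eq (μ0 : Measure Ω) (ℓ ℓ' : Kernel Ω Ω) [IsMarkovKernel ℓ]
    [IsMarkovKernel ℓ'] (hB : MeasurableSet B) {G : Set Ω} (hGm : MeasurableSet G)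
    (hGeq : ∀ x ∈ G, ℓ x = ℓ' x)
    (hnull' : ∀ N, fdd μ0 ℓ' N (SC B Gᶜ N) = 0) :
    ∀ N, (fdd μ0 ℓ N).map (stopF B N) = (fdd μ0 ℓ' N).map (stopF B N) := by
  intro N
  induction N with
  | zero => rfl
  | succ N IH =>
    ext s hs
    rw [Measure.map_apply (measurable_stopF hB (N + 1)) hs,
      Measure.map_apply (measurable_stopF hB (N + 1)) hs]
    have hpre : MeasurableSet (stopF B (N + 1) ⁻¹' s) := (measurable_stopF hB (N + 1)) hs
    rw [fdd_succ_apply _ _ _ hpre, fdd_succ_apply _ _ _ hpre]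
    set hfun : Kernel Ω Ω → (Fin (N + 1) → Ω) → ℝ≥0∞ := fun κ q =>
      if HitP B N q then s.indicator (fun _ => 1) (Fin.snoc q (q (Fin.last N)))
      else κ (q (Fin.last N)) {y | (Fin.snoc q y : Fin (N + 2) → Ω) ∈ s} with hfdef
    have hfm : ∀ (κ : Kernel Ω Ω), IsSFiniteKernel κ → Measurable (hfun κ) := by
      intro κ hκ
      refine Measurable.ite (measurable_hitSet hB N) ?_ (meas_ker_snoc κ hs)
      exact (measurable_const.indicator hs).comp
        ((measurable_snoc_joint N).comp (measurable_id.prodMk (measurable_pi_apply _)))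
    have hpoint : ∀ (κ : Kernel Ω Ω), IsMarkovKernel κ → ∀ p : Fin (N + 1) → Ω,
        κ (p (Fin.last N)) {y | (Fin.snoc p y : Fin (N + 2) → Ω) ∈ stopF B (N + 1) ⁻¹' s}
          = hfun κ (stopF B N p) := by
      intro κ hκ p
      by_cases hp : HitP B N p
      · have hset : {y | (Fin.snoc p y : Fin (N + 2) → Ω) ∈ stopF B (N + 1) ⁻¹' s}
            = {y : Ω | (Fin.snoc (stopF B N p) (stopF B N p (Fin.last N))
                : Fin (N + 2) → Ω) ∈ s} := by
          ext y
          simp only [Set.mem_setOf_eq, Set.mem_preimage, stopF_snoc_hit hp]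
        rw [hset, hfdef]
        simp only
        rw [if_pos (hitP_stopF hp)]
        by_cases hin : (Fin.snoc (stopF B N p) (stopF B N p (Fin.last N))
            : Fin (N + 2) → Ω) ∈ s
        · rw [Set.indicator_of_mem hin]
          have : {y : Ω | (Fin.snoc (stopF B N p) (stopF B N p (Fin.last N))
              : Fin (N + 2) → Ω) ∈ s} = univ := Set.eq_univ_of_forall fun y => hin
          rw [this, measure_univ]
        · rw [Set.indicator_of_notMem hin]
          have : {y : Ω | (Fin.snoc (stopF B N p) (stopF B N p (Fin.last N))
              : Fin (N + 2) → Ω) ∈ s} = ∅ :=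
            Set.eq_empty_iff_forall_notMem.mpr fun y => hin
          rw [this, measure_empty]
      · have h0 : stopF B N p = p := stopF_of_not_hit hp
        rw [h0, hfdef]
        simp only
        rw [if_neg hp]
        congr 1
        ext y
        simp only [Set.mem_setOf_eq, Set.mem_preimage, stopF_snoc_not_hit hp]
    have hl : ∫⁻ p, ℓ (p (Fin.last N))
          {y | (Fin.snoc p y : Fin (N + 2) → Ω) ∈ stopF B (N + 1) ⁻¹' s} ∂(fdd μ0 ℓ N)
        = ∫⁻ q, hfun ℓ q ∂((fdd μ0 ℓ' N).map (stopF B N)) := by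
      rw [← IH, lintegral_map (hfm ℓ inferInstance) (measurable_stopF hB N)]
      exact lintegral_congr (hpoint ℓ inferInstance)
    have hr : ∫⁻ p, ℓ' (p (Fin.last N))
          {y | (Fin.snoc p y : Fin (N + 2) → Ω) ∈ stopF B (N + 1) ⁻¹' s} ∂(fdd μ0 ℓ' N)
        = ∫⁻ q, hfun ℓ' q ∂((fdd μ0 ℓ' N).map (stopF B N)) := by
      rw [lintegral_map (hfm ℓ' inferInstance) (measurable_stopF hB N)]
      exact lintegral_congr (hpoint ℓ' inferInstance)
    rw [hl, hr]
    refine lintegral_congr_ae ?_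
    rw [Filter.EventuallyEq, ae_iff]
    refine measure_mono_null (t := SC B Gᶜ N) ?_ ?_
    · intro q hq
      simp only [Set.mem_setOf_eq] at hq
      by_cases hH : HitP B N q
      · exact absurd (by rw [hfdef]; simp only; rw [if_pos hH, if_pos hH]) hq
      · by_cases hG : q (Fin.last N) ∈ G
        · exact absurd (by rw [hfdef]; simp only; rw [if_neg hH, if_neg hH,
            hGeq _ hG]) hq
        · exact ⟨hG, not_hitP_iff.mp hH⟩
    · rw [Measure.map_apply (measurable_stopF hB N) (meas_SC hB hGm.compl N),
        stopF_preimage_SC hB N, hnull']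


end Meas
end BK

/-- **The sub-probability laws `ν_n` are absolutely continuous w.r.t. `ν`, and the law of the
stopped chain does not depend on the choice of the disintegrating kernel.** -/
theorem chain_law_independent_of_kernel
    {Ω : Type*} [MeasurableSpace Ω] [TopologicalSpace Ω] [PolishSpace Ω] [BorelSpace Ω]
    (A B : Set Ω) (hA : MeasurableSet A) (hB : MeasurableSet B) (hAB : Disjoint A B)
    (Φ : Measure (Ω × Ω)) (hΦ : IsUnitFlow A B Φ)
    (ℓ : Kernel Ω Ω) (hℓ : IsMarkovKernel ℓ) (hdis : Disintegrates Φ ℓ)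
    (P : Measure (ℕ → Ω)) (hP : IsChainLaw (Φ.fst.restrict A) ℓ P) :
    (∀ n : ℕ, ∀ C : Set Ω, MeasurableSet C → Φ.fst C = 0 →
      P {ω | ω n ∈ C ∧ ∀ m, 1 ≤ m → m ≤ n → ω m ∉ B} = 0) ∧
    (∀ (ℓ' : Kernel Ω Ω) (P' : Measure (ℕ → Ω)), IsMarkovKernel ℓ' →
      Disintegrates Φ ℓ' → IsChainLaw (Φ.fst.restrict A) ℓ' P' →
      P.map (stoppedPath B) = P'.map (stoppedPath B)) := by

  haveI := hℓ
  haveI := hP.1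
  haveI : SigmaFinite Φ := hΦ.1
  have hpart1 : ∀ n : ℕ, ∀ C : Set Ω, MeasurableSet C → Φ.fst C = 0 →
      P {ω | ω n ∈ C ∧ ∀ m, 1 ≤ m → m ≤ n → ω m ∉ B} = 0 := by
    intro n C hC hνC
    have hproj : Measurable (BK.proj Ω n) :=
      measurable_pi_lambda _ fun i => measurable_pi_apply _
    have hev : {ω : ℕ → Ω | ω n ∈ C ∧ ∀ m, 1 ≤ m → m ≤ n → ω m ∉ B}
        = BK.proj Ω n ⁻¹' BK.SC B C n := by
      ext ω
      simp only [Set.mem_setOf_eq, Set.mem_preimage, BK.SC, BK.proj]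
      constructor
      · rintro ⟨h1, h2⟩
        exact ⟨by rw [Fin.val_last]; exact h1, fun i hi => h2 (i : ℕ) hi (by omega)⟩
      · rintro ⟨h1, h2⟩
        rw [Fin.val_last] at h1
        exact ⟨h1, fun m hm1 hm2 => h2 ⟨m, by omega⟩ hm1⟩
    rw [hev, ← Measure.map_apply hproj (BK.meas_SC hB hC n)]
    rw [show (BK.proj Ω n) = (fun ω (i : Fin (n + 1)) => ω (i : ℕ)) from rfl, hP.2 n]
    exact BK.fdd_null hA hB hΦ ℓ hdis n C hC hνC
  refine ⟨hpart1, ?_⟩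
  intro ℓ' P' hℓ' hdis' hP'
  haveI := hℓ'
  haveI := hP'.1
  haveI : SigmaFinite Φ.fst := BK.nu_sigmaFinite hdis
  obtain ⟨G, hGm, hGnull, hGeq⟩ := BK.exists_good_set (ℓ := ℓ) (ℓ' := ℓ') hdis hdis'
  have hnull' : ∀ N, fdd (Φ.fst.restrict A) ℓ' N (BK.SC B Gᶜ N) = 0 :=
    fun N => BK.fdd_null hA hB hΦ ℓ' hdis' N Gᶜ hGm.compl hGnull
  have key := BK.stopped_fdd_eq (Φ.fst.restrict A) ℓ ℓ' hB hGm hGeq hnull'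
  haveI : IsProbabilityMeasure (P.map (stoppedPath B)) :=
    Measure.isProbabilityMeasure_map (BK.measurable_stoppedPath hB).aemeasurable
  haveI : IsProbabilityMeasure (P'.map (stoppedPath B)) :=
    Measure.isProbabilityMeasure_map (BK.measurable_stoppedPath hB).aemeasurable
  have hcyl : ∀ (Q : Measure (ℕ → Ω)) (ℓ'' : Kernel Ω Ω), IsMarkovKernel ℓ'' →
      IsChainLaw (Φ.fst.restrict A) ℓ'' Q → ∀ (s : Finset ℕ)
      (S : Set (∀ i : s, Ω)), MeasurableSet S →
      (Q.map (stoppedPath B)) (cylinder s S)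
        = ((fdd (Φ.fst.restrict A) ℓ'' (s.sup id)).map (BK.stopF B (s.sup id)))
            ((fun q : Fin (s.sup id + 1) → Ω =>
              fun i : s => q ⟨(i : ℕ), Nat.lt_succ_of_le (Finset.le_sup (f := id) i.2)⟩)
              ⁻¹' S) := by
    intro Q ℓ'' hM hCL s S hS
    haveI := hM
    set N := s.sup id with hNdef
    set r : (Fin (N + 1) → Ω) → (∀ i : s, Ω) :=
      fun q i => q ⟨(i : ℕ), Nat.lt_succ_of_le (Finset.le_sup (f := id) i.2)⟩ with hrdef
    have hrm : Measurable r := measurable_pi_lambda _ fun i => measurable_pi_apply _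
    have hprojN : Measurable (BK.proj Ω N) :=
      measurable_pi_lambda _ fun i => measurable_pi_apply _
    have h1 : cylinder s S = BK.proj Ω N ⁻¹' (r ⁻¹' S) := by
      ext ω
      simp only [mem_cylinder, Set.mem_preimage]
      have : s.restrict ω = r (BK.proj Ω N ω) := rfl
      rw [this]
    rw [h1, Measure.map_apply (BK.measurable_stoppedPath hB) (hprojN (hrm hS))]
    have h2 : stoppedPath B ⁻¹' (BK.proj Ω N ⁻¹' (r ⁻¹' S))
        = BK.proj Ω N ⁻¹' (BK.stopF B N ⁻¹' (r ⁻¹' S)) := by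
      ext ω
      simp only [Set.mem_preimage]
      rw [BK.proj_stoppedPath ω N]
    rw [h2, ← Measure.map_apply hprojN ((BK.measurable_stopF hB N) (hrm hS))]
    rw [show (BK.proj Ω N) = (fun ω (i : Fin (N + 1)) => ω (i : ℕ)) from rfl, hCL.2 N]
    rw [← Measure.map_apply (BK.measurable_stopF hB N) (hrm hS)]
  refine MeasureTheory.ext_of_generate_finite (measurableCylinders (fun _ : ℕ => Ω))
    ?_ isPiSystem_measurableCylinders ?_ (by simp)
  · exact generateFrom_measurableCylinders.symm
  · intro t ht
    obtain ⟨s, S, hS, rfl⟩ := (mem_measurableCylinders t).mp ht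
    rw [hcyl P ℓ hℓ hP s S hS, hcyl P' ℓ' hℓ' hP' s S hS, key (s.sup id)]
end

section
/- Discrepancy lemma: let Φ be a finite unit flow from A to B with associated Markov chain Y, and define the measure Φ̃ on Ω×Ω by ∫ f dΦ̃ = E^Φ[ Σ_{n≥1} f(Y_{n−1},Y_n) 1{τ_B^Y ≥ n} ] for bounded measurable f≥0, and Ψ = Φ − Φ̃. Then Φ̃ is a unit flow from A to B, Ψ is a nonnegative measure, and Ψ satisfies Kirchhoff's law on all of Ω: Ψ(C×Ω) = Ψ(Ω×C) for every measurable C⊂Ω. -/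
open MeasureTheory ProbabilityTheory ENNReal Set Filter
open scoped Classical

set_option linter.unusedSectionVars false

section DiscrepAux

open MeasureTheory ProbabilityTheory Set

variable {Ω : Type*} [MeasurableSpace Ω]

/-- The sub-probability laws `e_n` of `Y_n` on the event `{Y_1, …, Y_n ∉ B}`. -/
noncomputable def eMeas (B : Set Ω) (ℓ : Kernel Ω Ω) (μ0 : Measure Ω) : ℕ → Measure Ω
  | 0 => μ0
  | n + 1 => ((eMeas B ℓ μ0 n).bind ℓ).restrict Bᶜ

/-- Condition `p 1, …, p n ∉ B` for `p : Fin (n+1) → Ω`. -/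
def Hcnd (B : Set Ω) (n : ℕ) (p : Fin (n + 1) → Ω) : Prop :=
  ∀ m : Fin (n + 1), 1 ≤ (m : ℕ) → p m ∉ B

/-- Condition `q 1, …, q n ∉ B` for `q : Fin (n+2) → Ω`. -/
def Tcnd (B : Set Ω) (n : ℕ) (q : Fin (n + 2) → Ω) : Prop :=
  ∀ m : Fin (n + 2), 1 ≤ (m : ℕ) ∧ (m : ℕ) ≤ n → q m ∉ B

lemma measurableSet_cond {k : ℕ} (B : Set Ω) (hB : MeasurableSet B) (P : Fin k → Prop) :
    MeasurableSet {q : Fin k → Ω | ∀ m, P m → q m ∉ B} := by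
  have h : {q : Fin k → Ω | ∀ m, P m → q m ∉ B}
      = ⋂ m, ⋂ (_ : P m), (fun q : Fin k → Ω => q m) ⁻¹' Bᶜ := by
    ext q; simp [Set.mem_iInter]
  rw [h]
  exact MeasurableSet.iInter fun m => MeasurableSet.iInter fun _ =>
    (measurable_pi_apply m) hB.compl

lemma measurableSet_Hcnd (B : Set Ω) (hB : MeasurableSet B) (n : ℕ) :
    MeasurableSet {p : Fin (n + 1) → Ω | Hcnd B n p} :=
  measurableSet_cond B hB _

lemma measurableSet_Tcnd (B : Set Ω) (hB : MeasurableSet B) (n : ℕ) :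
    MeasurableSet {q : Fin (n + 2) → Ω | Tcnd B n q} :=
  measurableSet_cond B hB _

lemma Tcnd_snoc (B : Set Ω) (n : ℕ) (p : Fin (n + 1) → Ω) (y : Ω) :
    Tcnd B n (Fin.snoc p y) ↔ Hcnd B n p := by
  constructor
  · intro h m h1
    have h2 := h m.castSucc ⟨by simpa using h1, by
      have := m.isLt; simp only [Fin.coe_castSucc]; omega⟩
    rwa [Fin.snoc_castSucc] at h2
  · rintro h m ⟨h1, h2⟩
    induction m using Fin.lastCases with
    | last => exact absurd h2 (by simp only [Fin.val_last]; omega)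
    | cast j => rw [Fin.snoc_castSucc]; exact h j (by simpa using h1)

lemma Hcnd_snoc (B : Set Ω) (n : ℕ) (p : Fin (n + 1) → Ω) (y : Ω) :
    Hcnd B (n + 1) (Fin.snoc p y) ↔ Hcnd B n p ∧ y ∉ B := by
  constructor
  · intro h
    refine ⟨fun m h1 => ?_, ?_⟩
    · have h2 := h m.castSucc (by simpa using h1)
      rwa [Fin.snoc_castSucc] at h2
    · have h2 := h (Fin.last (n + 1)) (by simp only [Fin.val_last]; omega)
      rwa [Fin.snoc_last] at h2
  · rintro ⟨hp, hy⟩ m h1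
    induction m using Fin.lastCases with
    | last => rw [Fin.snoc_last]; exact hy
    | cast j => rw [Fin.snoc_castSucc]; exact hp j (by simpa using h1)

lemma measurable_snoc_pair (n : ℕ) :
    Measurable (fun q : (Fin (n + 1) → Ω) × Ω => (Fin.snoc q.1 q.2 : Fin (n + 2) → Ω)) := by
  apply measurable_pi_lambda
  intro i
  induction i using Fin.lastCases with
  | last => simpa only [Fin.snoc_last] using measurable_snd
  | cast j =>
      simp only [Fin.snoc_castSucc]
      exact (measurable_pi_apply j).comp measurable_fst

lemma measurable_snoc_fixed (n : ℕ) (p : Fin (n + 1) → Ω) :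
    Measurable (fun y : Ω => (Fin.snoc p y : Fin (n + 2) → Ω)) :=
  (measurable_snoc_pair n).comp (measurable_prodMk_left)

lemma measurable_fddKernel (ℓ : Kernel Ω Ω) [IsSFiniteKernel ℓ] (n : ℕ) :
    Measurable (fun p : Fin (n + 1) → Ω =>
      ((ℓ (p (Fin.last n))).map (Fin.snoc p) : Measure (Fin (n + 2) → Ω))) := by
  apply Measure.measurable_of_measurable_coe
  intro s hs
  have h1 : ∀ p : Fin (n + 1) → Ω,
      ((ℓ (p (Fin.last n))).map (Fin.snoc p)) s
        = (ℓ.comap (fun p : Fin (n + 1) → Ω => p (Fin.last n)) (measurable_pi_apply _)) p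
            (Prod.mk p ⁻¹'
              ((fun q : (Fin (n + 1) → Ω) × Ω => (Fin.snoc q.1 q.2 : Fin (n + 2) → Ω)) ⁻¹' s)) := by
    intro p
    rw [Measure.map_apply (measurable_snoc_fixed n p) hs, Kernel.comap_apply]
    rfl
  simp_rw [h1]
  exact Kernel.measurable_kernel_prodMk_left ((measurable_snoc_pair n) hs)

lemma chainL {B : Set Ω} (hB : MeasurableSet B) (ℓ : Kernel Ω Ω) [IsMarkovKernel ℓ]
    (μ0 : Measure Ω) (n : ℕ) :
    ∀ f : Ω → ℝ≥0∞, Measurable f →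
      ∫⁻ p, (if Hcnd B n p then f (p (Fin.last n)) else 0) ∂(fdd μ0 ℓ n)
        = ∫⁻ x, f x ∂(eMeas B ℓ μ0 n) := by
  induction n with
  | zero =>
      intro f hf
      have h0 : ∀ p : Fin 1 → Ω,
          (if Hcnd B 0 p then f (p (Fin.last 0)) else 0) = f (p (Fin.last 0)) := by
        intro p
        exact if_pos (fun m h1 => absurd h1 (by have := m.isLt; omega))
      rw [lintegral_congr h0]
      exact lintegral_map (hf.comp (measurable_pi_apply (Fin.last 0)))
        (measurable_pi_lambda (fun (x : Ω) => fun _ : Fin 1 => x) fun _ => measurable_id)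
  | succ n ih =>
      intro f hf
      have hFmeas : Measurable (fun q : Fin (n + 2) → Ω =>
          if Hcnd B (n + 1) q then f (q (Fin.last (n + 1))) else 0) :=
        Measurable.ite (measurableSet_Hcnd B hB (n + 1))
          (hf.comp (measurable_pi_apply _)) measurable_const
      have hin : ∀ p : Fin (n + 1) → Ω,
          ∫⁻ q, (if Hcnd B (n + 1) q then f (q (Fin.last (n + 1))) else 0)
              ∂((ℓ (p (Fin.last n))).map (Fin.snoc p) : Measure (Fin (n + 2) → Ω))
            = if Hcnd B n p then
                ∫⁻ y, (if y ∉ B then f y else 0) ∂(ℓ (p (Fin.last n))) else 0 := by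
        intro p
        refine (lintegral_map hFmeas (measurable_snoc_fixed n p)).trans ?_
        by_cases hp : Hcnd B n p
        · rw [if_pos hp]
          refine lintegral_congr fun y => ?_
          rw [Fin.snoc_last]
          by_cases hy : y ∉ B
          · rw [if_pos ((Hcnd_snoc B n p y).mpr ⟨hp, hy⟩), if_pos hy]
          · rw [if_neg (fun h => hy ((Hcnd_snoc B n p y).mp h).2), if_neg hy]
        · rw [if_neg hp]
          refine (lintegral_congr fun y => ?_).trans lintegral_zero
          exact if_neg (fun h => hp ((Hcnd_snoc B n p y).mp h).1)
      have hf' : Measurable (fun x : Ω => ∫⁻ y, (if y ∉ B then f y else 0) ∂(ℓ x)) := by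
        refine Measurable.lintegral_kernel_prod_right ?_
        have huc : (Function.uncurry fun (_ : Ω) (y : Ω) => if y ∉ B then f y else 0)
            = fun z : Ω × Ω => if z.2 ∉ B then f z.2 else 0 := rfl
        rw [huc]
        exact Measurable.ite (measurable_snd hB.compl) (hf.comp measurable_snd) measurable_const
      refine (Measure.lintegral_bind (measurable_fddKernel ℓ n).aemeasurable hFmeas.aemeasurable).trans ?_
      refine (lintegral_congr hin).trans ?_
      refine (ih (fun x => ∫⁻ y, (if y ∉ B then f y else 0) ∂(ℓ x)) hf').trans ?_
      have e2 : ∫⁻ x, f x ∂(eMeas B ℓ μ0 (n + 1))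
          = ∫⁻ x, ∫⁻ y, Bᶜ.indicator f y ∂(ℓ x) ∂(eMeas B ℓ μ0 n) := by
        refine Eq.trans ?_ (Measure.lintegral_bind ℓ.measurable.aemeasurable (hf.indicator hB.compl).aemeasurable)
        exact (lintegral_indicator hB.compl f).symm
      rw [e2]
      refine lintegral_congr fun x => lintegral_congr fun y => ?_
      by_cases hy : y ∈ Bᶜ
      · rw [Set.indicator_of_mem hy]
        exact if_pos hy
      · rw [Set.indicator_of_notMem hy]
        exact if_neg (fun h => hy h)

lemma chainT {B : Set Ω} (hB : MeasurableSet B) (ℓ : Kernel Ω Ω) [IsMarkovKernel ℓ]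
    (μ0 : Measure Ω) (n : ℕ) (g : Ω × Ω → ℝ≥0∞) (hg : Measurable g) :
    ∫⁻ q, (if Tcnd B n q then g (q ((Fin.last n).castSucc), q (Fin.last (n + 1))) else 0)
        ∂(fdd μ0 ℓ (n + 1))
      = ∫⁻ x, ∫⁻ y, g (x, y) ∂(ℓ x) ∂(eMeas B ℓ μ0 n) := by
  have hFmeas : Measurable (fun q : Fin (n + 2) → Ω =>
      if Tcnd B n q then g (q ((Fin.last n).castSucc), q (Fin.last (n + 1))) else 0) :=
    Measurable.ite (measurableSet_Tcnd B hB n)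
      (hg.comp ((measurable_pi_apply _).prodMk (measurable_pi_apply _))) measurable_const
  have hin : ∀ p : Fin (n + 1) → Ω,
      ∫⁻ q, (if Tcnd B n q then g (q ((Fin.last n).castSucc), q (Fin.last (n + 1))) else 0)
          ∂((ℓ (p (Fin.last n))).map (Fin.snoc p) : Measure (Fin (n + 2) → Ω))
        = if Hcnd B n p then ∫⁻ y, g (p (Fin.last n), y) ∂(ℓ (p (Fin.last n))) else 0 := by
    intro p
    refine (lintegral_map hFmeas (measurable_snoc_fixed n p)).trans ?_
    by_cases hp : Hcnd B n p
    · rw [if_pos hp]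
      refine lintegral_congr fun y => ?_
      rw [Fin.snoc_castSucc, Fin.snoc_last]
      exact if_pos ((Tcnd_snoc B n p y).mpr hp)
    · rw [if_neg hp]
      refine (lintegral_congr fun y => ?_).trans lintegral_zero
      exact if_neg (fun h => hp ((Tcnd_snoc B n p y).mp h))
  have hg' : Measurable (fun x : Ω => ∫⁻ y, g (x, y) ∂(ℓ x)) := by
    refine Measurable.lintegral_kernel_prod_right ?_
    exact hg
  refine (Measure.lintegral_bind (measurable_fddKernel ℓ n).aemeasurable hFmeas.aemeasurable).trans ?_
  exact (lintegral_congr hin).trans (chainL hB ℓ μ0 n (fun x => ∫⁻ y, g (x, y) ∂(ℓ x)) hg')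

lemma mainM {B : Set Ω} (hB : MeasurableSet B) (ℓ : Kernel Ω Ω) [IsMarkovKernel ℓ]
    (μ0 : Measure Ω) (P : Measure (ℕ → Ω)) (hP : IsChainLaw μ0 ℓ P)
    (g : Ω × Ω → ℝ≥0∞) (hg : Measurable g) :
    ∫⁻ ω, stoppedSum B g ω ∂P
      = ∫⁻ x, ∫⁻ y, g (x, y) ∂(ℓ x) ∂(Measure.sum (eMeas B ℓ μ0)) := by
  have hTm : ∀ n : ℕ, Measurable (fun q : Fin (n + 2) → Ω =>
      if Tcnd B n q then g (q ((Fin.last n).castSucc), q (Fin.last (n + 1))) else 0) :=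
    fun n => Measurable.ite (measurableSet_Tcnd B hB n)
      (hg.comp ((measurable_pi_apply _).prodMk (measurable_pi_apply _))) measurable_const
  have hproj : ∀ n : ℕ, Measurable (fun ω : ℕ → Ω => fun i : Fin (n + 2) => ω (i : ℕ)) :=
    fun n => measurable_pi_lambda _ fun i => measurable_pi_apply _
  have hterm : ∀ (n : ℕ) (ω : ℕ → Ω),
      (@ite ℝ≥0∞ (∀ m, 1 ≤ m → m ≤ n → ω m ∉ B) (Classical.propDecidable _)
          (g (ω n, ω (n + 1))) 0)
        = (fun q : Fin (n + 2) → Ω =>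
            if Tcnd B n q then g (q ((Fin.last n).castSucc), q (Fin.last (n + 1))) else 0)
          (fun i : Fin (n + 2) => ω (i : ℕ)) := by
    intro n ω
    have hiff : (∀ m, 1 ≤ m → m ≤ n → ω m ∉ B)
        ↔ Tcnd B n (fun i : Fin (n + 2) => ω (i : ℕ)) := by
      constructor
      · intro h m hm
        exact h (m : ℕ) hm.1 hm.2
      · intro h m h1 h2
        exact h ⟨m, by omega⟩ ⟨h1, h2⟩
    simp only [hiff, Fin.coe_castSucc, Fin.val_last]
  have h2 : ∀ n : ℕ,
      ∫⁻ ω, (@ite ℝ≥0∞ (∀ m, 1 ≤ m → m ≤ n → ω m ∉ B) (Classical.propDecidable _)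
          (g (ω n, ω (n + 1))) 0) ∂P
        = ∫⁻ x, ∫⁻ y, g (x, y) ∂(ℓ x) ∂(eMeas B ℓ μ0 n) := by
    intro n
    have hfd : P.map (fun ω : ℕ → Ω => fun i : Fin (n + 2) => ω (i : ℕ)) = fdd μ0 ℓ (n + 1) :=
      hP.2 (n + 1)
    refine (lintegral_congr (hterm n)).trans ?_
    refine ((lintegral_map (hTm n) (hproj n)).symm).trans ?_
    rw [hfd]
    exact chainT hB ℓ μ0 n g hg
  calc ∫⁻ ω, stoppedSum B g ω ∂P
      = ∑' n : ℕ, ∫⁻ ω, (@ite ℝ≥0∞ (∀ m, 1 ≤ m → m ≤ n → ω m ∉ B) (Classical.propDecidable _)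
          (g (ω n, ω (n + 1))) 0) ∂P := by
        simp only [stoppedSum]
        exact lintegral_tsum fun n =>
          ((hTm n).comp (hproj n)).aemeasurable.congr (ae_of_all P fun ω => (hterm n ω).symm)
    _ = ∑' n : ℕ, ∫⁻ x, ∫⁻ y, g (x, y) ∂(ℓ x) ∂(eMeas B ℓ μ0 n) := tsum_congr h2
    _ = ∫⁻ x, ∫⁻ y, g (x, y) ∂(ℓ x) ∂(Measure.sum (eMeas B ℓ μ0)) :=
        (lintegral_sum_measure _ _).symm

lemma rectL (ℓ : Kernel Ω Ω) [IsMarkovKernel ℓ] (m : Measure Ω) [SFinite m]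
    {C : Set Ω} (hC : MeasurableSet C) :
    (m.compProd ℓ) (C ×ˢ Set.univ) = m C := by
  rw [Measure.compProd_apply_prod hC MeasurableSet.univ]
  simp only [measure_univ]
  exact setLIntegral_one C

lemma rectR (ℓ : Kernel Ω Ω) [IsMarkovKernel ℓ] (m : Measure Ω) [SFinite m]
    {C : Set Ω} (hC : MeasurableSet C) :
    (m.compProd ℓ) (Set.univ ×ˢ C) = (m.bind ℓ) C := by
  rw [Measure.compProd_apply_prod MeasurableSet.univ hC,
    Measure.bind_apply hC ℓ.measurable.aemeasurable, Measure.restrict_univ]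

theorem flowfacts {A B : Set Ω}
    (hA : MeasurableSet A) (hB : MeasurableSet B)
    (ℓ : Kernel Ω Ω) [IsMarkovKernel ℓ] (ν : Measure Ω) [IsFiniteMeasure ν]
    (hνA : ν A = 1) (hνB : ν B = 0) (hℓA : (ν.bind ℓ) A = 0) (hℓB : (ν.bind ℓ) B = 1)
    (hIν : ∀ C : Set Ω, MeasurableSet C → ν C = ν (C ∩ A) + (ν.bind ℓ) (C ∩ Bᶜ)) :
    ∃ ρ δ : Measure Ω, ρ = Measure.sum (eMeas B ℓ (ν.restrict A)) ∧
      ν = ρ + δ ∧ IsFiniteMeasure ρ ∧ IsFiniteMeasure δ ∧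
      ρ A = 1 ∧ ρ B = 0 ∧ (ρ.bind ℓ) A = 0 ∧ (ρ.bind ℓ) B = 1 ∧
      (∀ C : Set Ω, MeasurableSet C → C ⊆ (A ∪ B)ᶜ → ρ C = (ρ.bind ℓ) C) ∧
      (∀ C : Set Ω, MeasurableSet C → δ C = (δ.bind ℓ) C) := by
  classical
  set E : ℕ → Measure Ω := eMeas B ℓ (ν.restrict A) with hEdef
  set ρ : Measure Ω := Measure.sum E with hρdef
  have hE0 : ∀ C : Set Ω, MeasurableSet C → E 0 C = ν (C ∩ A) := by
    intro C hC
    rw [hEdef]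
    exact Measure.restrict_apply hC
  have hEsucc : ∀ (n : ℕ) (C : Set Ω), MeasurableSet C →
      E (n + 1) C = ((E n).bind ℓ) (C ∩ Bᶜ) := by
    intro n C hC
    rw [hEdef]
    exact Measure.restrict_apply hC
  have hbmono : ∀ (μ1 μ2 : Measure Ω), μ1 ≤ μ2 → ∀ s : Set Ω, MeasurableSet s →
      (μ1.bind ℓ) s ≤ (μ2.bind ℓ) s := by
    intro μ1 μ2 h s hs
    rw [Measure.bind_apply hs ℓ.measurable.aemeasurable, Measure.bind_apply hs ℓ.measurable.aemeasurable]
    exact lintegral_mono' h le_rfl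
  have hpart : ∀ N : ℕ, (∑ n ∈ Finset.range N, E n) ≤ ν := by
    intro N
    induction N with
    | zero => rw [Finset.range_zero, Finset.sum_empty]; exact Measure.zero_le ν
    | succ N ihN =>
        rw [Measure.le_iff]
        intro C hC
        rw [Measure.finset_sum_apply, Finset.sum_range_succ']
        have h1 : ∀ i : ℕ, E (i + 1) C = ∫⁻ x, (ℓ x) (C ∩ Bᶜ) ∂(E i) := by
          intro i
          rw [hEsucc i C hC, Measure.bind_apply (hC.inter hB.compl) ℓ.measurable.aemeasurable]
        calc (∑ i ∈ Finset.range N, E (i + 1) C) + E 0 C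
            = (∑ i ∈ Finset.range N, ∫⁻ x, (ℓ x) (C ∩ Bᶜ) ∂(E i)) + ν (C ∩ A) := by
              rw [hE0 C hC]
              exact congrArg (· + ν (C ∩ A)) (Finset.sum_congr rfl fun i _ => h1 i)
          _ = (∫⁻ x, (ℓ x) (C ∩ Bᶜ) ∂(∑ i ∈ Finset.range N, E i)) + ν (C ∩ A) := by
              rw [lintegral_finset_sum_measure]
          _ ≤ (∫⁻ x, (ℓ x) (C ∩ Bᶜ) ∂ν) + ν (C ∩ A) :=
              add_le_add_left (lintegral_mono' ihN le_rfl) _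
          _ = (ν.bind ℓ) (C ∩ Bᶜ) + ν (C ∩ A) := by
              rw [Measure.bind_apply (hC.inter hB.compl) ℓ.measurable.aemeasurable]
          _ = ν C := by rw [add_comm]; exact (hIν C hC).symm
  have hρle : ∀ C : Set Ω, MeasurableSet C → ρ C ≤ ν C := by
    intro C hC
    rw [hρdef, Measure.sum_apply _ hC, ENNReal.tsum_eq_iSup_nat]
    refine iSup_le fun N => ?_
    rw [← Measure.finset_sum_apply]
    exact Measure.le_iff.mp (hpart N) C hC
  have hρν : ρ ≤ ν := Measure.le_iff.mpr hρle
  have hρfin : IsFiniteMeasure ρ :=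
    ⟨lt_of_le_of_lt (hρle Set.univ MeasurableSet.univ) (measure_lt_top ν Set.univ)⟩
  haveI := hρfin
  set δ : Measure Ω := ν - ρ with hδdef
  have hδfin : IsFiniteMeasure δ := by
    constructor
    rw [hδdef, Measure.sub_apply MeasurableSet.univ hρν]
    exact lt_of_le_of_lt tsub_le_self (measure_lt_top ν Set.univ)
  haveI := hδfin
  have hνρδ : ν = ρ + δ := by
    rw [add_comm, hδdef]
    exact (Measure.sub_add_cancel_of_le hρν).symm
  have hbApp : ∀ (m : Measure Ω) (s : Set Ω), MeasurableSet s →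
      (m.bind ℓ) s = ∫⁻ x, (ℓ x) s ∂m := fun m s hs => Measure.bind_apply hs ℓ.measurable.aemeasurable
  have hbindsum : ∀ s : Set Ω, MeasurableSet s → (ρ.bind ℓ) s = ∑' n, ((E n).bind ℓ) s := by
    intro s hs
    rw [hbApp ρ s hs, hρdef, lintegral_sum_measure]
    exact tsum_congr fun n => (hbApp (E n) s hs).symm
  have hIρ : ∀ C : Set Ω, MeasurableSet C → ρ C = ν (C ∩ A) + (ρ.bind ℓ) (C ∩ Bᶜ) := by
    intro C hC
    rw [hbindsum _ (hC.inter hB.compl), hρdef, Measure.sum_apply _ hC,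
        tsum_eq_zero_add' ENNReal.summable, hE0 C hC]
    congr 1
    exact tsum_congr fun n => hEsucc n C hC
  have hνadd : ∀ C : Set Ω, MeasurableSet C → ν C = ρ C + δ C := by
    intro C hC
    rw [hνρδ]
    exact Measure.add_apply ρ δ C
  have hℓadd : ∀ s : Set Ω, MeasurableSet s →
      (ν.bind ℓ) s = (ρ.bind ℓ) s + (δ.bind ℓ) s := by
    intro s hs
    rw [hbApp ν s hs, hbApp ρ s hs, hbApp δ s hs, hνρδ, lintegral_add_measure]
  have hstepA : ∀ C : Set Ω, MeasurableSet C → δ C = (δ.bind ℓ) (C ∩ Bᶜ) := by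
    intro C hC
    have h1 : ρ C + δ C = ρ C + (δ.bind ℓ) (C ∩ Bᶜ) := by
      calc ρ C + δ C = ν C := (hνadd C hC).symm
        _ = ν (C ∩ A) + (ν.bind ℓ) (C ∩ Bᶜ) := hIν C hC
        _ = ν (C ∩ A) + ((ρ.bind ℓ) (C ∩ Bᶜ) + (δ.bind ℓ) (C ∩ Bᶜ)) := by
            rw [hℓadd _ (hC.inter hB.compl)]
        _ = (ν (C ∩ A) + (ρ.bind ℓ) (C ∩ Bᶜ)) + (δ.bind ℓ) (C ∩ Bᶜ) := (add_assoc _ _ _).symm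
        _ = ρ C + (δ.bind ℓ) (C ∩ Bᶜ) := by rw [← hIρ C hC]
    exact (ENNReal.add_right_inj (measure_ne_top ρ C)).mp h1
  have hδB : (δ.bind ℓ) B = 0 := by
    have huniv : δ Set.univ = (δ.bind ℓ) Bᶜ := by
      have h := hstepA Set.univ MeasurableSet.univ
      rwa [Set.univ_inter] at h
    have hδu : (δ.bind ℓ) Set.univ = δ Set.univ := by
      rw [hbApp δ Set.univ MeasurableSet.univ]
      simp
    have h2 : (δ.bind ℓ) B + (δ.bind ℓ) Bᶜ = 0 + (δ.bind ℓ) Bᶜ := by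
      rw [measure_add_measure_compl hB, hδu, huniv, zero_add]
    have hfin2 : (δ.bind ℓ) Bᶜ ≠ ⊤ := by
      rw [← huniv]; exact measure_ne_top δ Set.univ
    exact (ENNReal.add_left_inj hfin2).mp h2
  have hδharm : ∀ C : Set Ω, MeasurableSet C → δ C = (δ.bind ℓ) C := by
    intro C hC
    have h1 : (δ.bind ℓ) (C ∩ B) + (δ.bind ℓ) (C \ B) = (δ.bind ℓ) C :=
      measure_inter_add_diff C hB
    have h2 : (δ.bind ℓ) (C ∩ B) = 0 := measure_mono_null Set.inter_subset_right hδB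
    rw [hstepA C hC, ← h1, h2, zero_add, Set.diff_eq]
  have hEleρ : ∀ n : ℕ, E n ≤ ρ := by
    intro n
    rw [hρdef]
    exact Measure.le_sum E n
  have hEleν : ∀ n : ℕ, E n ≤ ν := fun n => le_trans (hEleρ n) hρν
  have hρA : ρ A = 1 := by
    rw [hρdef, Measure.sum_apply _ hA, tsum_eq_zero_add' ENNReal.summable]
    have h0 : E 0 A = 1 := by rw [hE0 A hA, Set.inter_self, hνA]
    have hs' : ∀ n : ℕ, E (n + 1) A = 0 := by
      intro n
      refine le_antisymm ?_ zero_le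
      rw [hEsucc n A hA]
      calc ((E n).bind ℓ) (A ∩ Bᶜ) ≤ ((E n).bind ℓ) A := measure_mono Set.inter_subset_left
        _ ≤ (ν.bind ℓ) A := hbmono _ _ (hEleν n) A hA
        _ = 0 := hℓA
    rw [h0]
    simp [hs']
  have hρB : ρ B = 0 := le_antisymm (le_of_le_of_eq (hρle B hB) hνB) zero_le
  have hρℓA : (ρ.bind ℓ) A = 0 :=
    le_antisymm (le_of_le_of_eq (hbmono ρ ν hρν A hA) hℓA) zero_le
  have hρℓB : (ρ.bind ℓ) B = 1 := by
    have h := hℓadd B hB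
    rw [hℓB, hδB, add_zero] at h
    exact h.symm
  have hKirρ : ∀ C : Set Ω, MeasurableSet C → C ⊆ (A ∪ B)ᶜ → ρ C = (ρ.bind ℓ) C := by
    intro C hC hCsub
    have hCA : C ∩ A = ∅ := by
      ext x
      simp only [Set.mem_inter_iff, Set.mem_empty_iff_false, iff_false, not_and]
      intro hxC hxA
      exact (hCsub hxC) (Set.mem_union_left B hxA)
    have hCB : C ∩ Bᶜ = C :=
      Set.inter_eq_left.mpr fun x hx hxB => (hCsub hx) (Set.mem_union_right A hxB)
    rw [hIρ C hC, hCA, hCB, measure_empty, zero_add]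
  exact ⟨ρ, δ, hρdef, hνρδ, hρfin, hδfin, hρA, hρB, hρℓA, hρℓB, hKirρ, hδharm⟩

end DiscrepAux

/-- **Discrepancy lemma.** -/
theorem discrepancy_lemma
    {Ω : Type*} [MeasurableSpace Ω] [TopologicalSpace Ω] [PolishSpace Ω] [BorelSpace Ω]
    (A B : Set Ω) (hA : MeasurableSet A) (hB : MeasurableSet B) (hAB : Disjoint A B)
    (Φ : Measure (Ω × Ω)) (hΦ : IsUnitFlow A B Φ) (hfin : Φ univ < ⊤)
    (ℓ : Kernel Ω Ω) (hℓ : IsMarkovKernel ℓ) (hdis : Disintegrates Φ ℓ)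
    (P : Measure (ℕ → Ω)) (hP : IsChainLaw (Φ.fst.restrict A) ℓ P)
    (tΦ : Measure (Ω × Ω))
    (htΦ : ∀ g : Ω × Ω → ℝ≥0∞, Measurable g →
      ∫⁻ p, g p ∂tΦ = ∫⁻ ω, stoppedSum B g ω ∂P) :
    IsUnitFlow A B tΦ ∧
    ∃ Ψ : Measure (Ω × Ω), Φ = tΦ + Ψ ∧
      ∀ C : Set Ω, MeasurableSet C → Ψ (C ×ˢ univ) = Ψ (univ ×ˢ C) := by
  classical
  haveI := hℓ
  haveI : IsFiniteMeasure Φ := ⟨hfin⟩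
  obtain ⟨hσΦ, hAuniv, hunivA, hunivB, hBuniv, hKirΦ, χ, hχm, hχ0, hχa⟩ := hΦ
  have hfst : ∀ C : Set Ω, MeasurableSet C → Φ (C ×ˢ univ) = Φ.fst C := by
    intro C hC
    rw [Measure.fst_apply hC, Set.prod_univ]
  have hsnd : ∀ C : Set Ω, MeasurableSet C → Φ (univ ×ˢ C) = (Φ.fst.bind ℓ) C := by
    intro C hC
    rw [Measure.bind_apply hC ℓ.measurable.aemeasurable,
      ← lintegral_indicator_one (MeasurableSet.univ.prod hC),
      hdis _ (measurable_one.indicator (MeasurableSet.univ.prod hC))]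
    refine lintegral_congr fun x => ?_
    rw [← lintegral_indicator_one hC]
    refine lintegral_congr fun y => ?_
    simp [Set.indicator_apply, Set.mem_prod]
  have hνA : Φ.fst A = 1 := by rw [← hfst A hA]; exact hAuniv
  have hνB : Φ.fst B = 0 := by rw [← hfst B hB]; exact hBuniv
  have hℓA : (Φ.fst.bind ℓ) A = 0 := by rw [← hsnd A hA]; exact hunivA
  have hℓB : (Φ.fst.bind ℓ) B = 1 := by rw [← hsnd B hB]; exact hunivB
  have hIν : ∀ C : Set Ω, MeasurableSet C →
      Φ.fst C = Φ.fst (C ∩ A) + (Φ.fst.bind ℓ) (C ∩ Bᶜ) := by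
    intro C hC
    have h1 : Φ.fst (C ∩ A) + Φ.fst (C \ A) = Φ.fst C := measure_inter_add_diff C hA
    have h2 : Φ.fst ((C \ A) ∩ B) + Φ.fst ((C \ A) \ B) = Φ.fst (C \ A) :=
      measure_inter_add_diff _ hB
    have h3 : Φ.fst ((C \ A) ∩ B) = 0 := measure_mono_null Set.inter_subset_right hνB
    have hmeas : MeasurableSet ((C \ A) \ B) := (hC.diff hA).diff hB
    have hsub : (C \ A) \ B ⊆ (A ∪ B)ᶜ := by
      intro x hx
      simp only [Set.mem_diff] at hx
      simp only [Set.mem_compl_iff, Set.mem_union]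
      tauto
    have h4 : Φ.fst ((C \ A) \ B) = (Φ.fst.bind ℓ) ((C \ A) \ B) := by
      rw [← hfst _ hmeas, ← hsnd _ hmeas]
      exact hKirΦ _ hmeas hsub
    have h5 : (Φ.fst.bind ℓ) ((C ∩ Bᶜ) ∩ A) + (Φ.fst.bind ℓ) ((C ∩ Bᶜ) \ A)
        = (Φ.fst.bind ℓ) (C ∩ Bᶜ) := measure_inter_add_diff _ hA
    have h6 : (Φ.fst.bind ℓ) ((C ∩ Bᶜ) ∩ A) = 0 :=
      measure_mono_null Set.inter_subset_right hℓA
    have hset : (C ∩ Bᶜ) \ A = (C \ A) \ B := by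
      ext x
      simp only [Set.mem_diff, Set.mem_inter_iff, Set.mem_compl_iff]
      tauto
    calc Φ.fst C = Φ.fst (C ∩ A) + Φ.fst (C \ A) := h1.symm
      _ = Φ.fst (C ∩ A) + (Φ.fst ((C \ A) ∩ B) + Φ.fst ((C \ A) \ B)) := by rw [h2]
      _ = Φ.fst (C ∩ A) + Φ.fst ((C \ A) \ B) := by rw [h3, zero_add]
      _ = Φ.fst (C ∩ A) + (Φ.fst.bind ℓ) ((C ∩ Bᶜ) \ A) := by rw [h4, hset]
      _ = Φ.fst (C ∩ A) + ((Φ.fst.bind ℓ) ((C ∩ Bᶜ) ∩ A) + (Φ.fst.bind ℓ) ((C ∩ Bᶜ) \ A)) := by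
          rw [h6, zero_add]
      _ = Φ.fst (C ∩ A) + (Φ.fst.bind ℓ) (C ∩ Bᶜ) := by rw [h5]
  obtain ⟨ρ, δ, hρdef, hνρδ, hρfin, hδfin, hρA, hρB, hρℓA, hρℓB, hKirρ, hδharm⟩ :=
    flowfacts hA hB ℓ Φ.fst hνA hνB hℓA hℓB hIν
  haveI := hρfin
  haveI := hδfin
  have hM : ∀ g : Ω × Ω → ℝ≥0∞, Measurable g →
      ∫⁻ p, g p ∂tΦ = ∫⁻ x, ∫⁻ y, g (x, y) ∂(ℓ x) ∂ρ := by
    intro g hg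
    rw [htΦ g hg, mainM hB ℓ (Φ.fst.restrict A) P hP g hg, ← hρdef]
  have htΦeq : tΦ = ρ.compProd ℓ := by
    ext s hs
    rw [Measure.compProd_apply hs, ← lintegral_indicator_one hs,
      hM _ (measurable_one.indicator hs)]
    refine lintegral_congr fun x => ?_
    rw [← lintegral_indicator_one (measurable_prodMk_left hs)]
    refine lintegral_congr fun y => ?_
    simp [Set.indicator_apply, Set.mem_preimage]
  have hΦeq : Φ = Φ.fst.compProd ℓ := by
    ext s hs
    rw [Measure.compProd_apply hs, ← lintegral_indicator_one hs,
      hdis _ (measurable_one.indicator hs)]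
    refine lintegral_congr fun x => ?_
    rw [← lintegral_indicator_one (measurable_prodMk_left hs)]
    refine lintegral_congr fun y => ?_
    simp [Set.indicator_apply, Set.mem_preimage]
  have hsplit : Φ = tΦ + δ.compProd ℓ := by
    rw [htΦeq]
    calc Φ = Φ.fst.compProd ℓ := hΦeq
      _ = (ρ + δ).compProd ℓ := by rw [hνρδ]
      _ = ρ.compProd ℓ + δ.compProd ℓ := Measure.compProd_add_left ρ δ ℓ
  have htΦle : tΦ ≤ Φ := by
    rw [hsplit]
    refine Measure.le_iff.mpr fun s hs => ?_
    rw [Measure.add_apply]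
    exact le_self_add
  haveI : IsFiniteMeasure tΦ :=
    ⟨lt_of_le_of_lt (Measure.le_iff.mp htΦle univ MeasurableSet.univ) hfin⟩
  constructor
  · refine ⟨inferInstance, ?_, ?_, ?_, ?_, ?_, χ, hχm, ?_, hχa⟩
    · rw [htΦeq, rectL ℓ ρ hA]; exact hρA
    · rw [htΦeq, rectR ℓ ρ hA]; exact hρℓA
    · rw [htΦeq, rectR ℓ ρ hB]; exact hρℓB
    · rw [htΦeq, rectL ℓ ρ hB]; exact hρB
    · intro C hC hCsub
      rw [htΦeq, rectL ℓ ρ hC, rectR ℓ ρ hC]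
      exact hKirρ C hC hCsub
    · exact le_antisymm
        (le_trans (Measure.le_iff.mp htΦle _ hχm.compl) (le_of_eq hχ0)) zero_le
  · refine ⟨δ.compProd ℓ, hsplit, ?_⟩
    intro C hC
    rw [rectL ℓ δ hC, rectR ℓ δ hC]
    exact hδharm C hC
end
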